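/- arXiv:1401.1727 — 2 statements merged into one kernel-verified Lean document; each statement's English description precedes it below -/
import Mathlib

section
/- For every β > 0, σ̄_β ≤ 2√2/3, and there exists a constant C > 0 independent of β such that σ̄_β ≥ 2√2/3 - √2 C β^{-1/4}. In particular σ̄_β → 2√2/3 as β → +∞. -/
open MeasureTheory Real Set Filter

noncomputable def gInt (β : ℝ) (v φ : ℝ → ℝ) (t : ℝ) : ℝ :=
  (deriv v t)^2 + (1 - (v t)^2)^2 / 2
    + (v t)^2 * (deriv φ t)^2 / 4 + (β/4) * (v t)^4 * (Real.sin (φ t))^2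

noncomputable def Gbeta (β : ℝ) (v φ : ℝ → ℝ) : ℝ := (1/2) * ∫ t : ℝ, gInt β v φ t

def Admissible (β : ℝ) (v φ : ℝ → ℝ) : Prop :=
  Differentiable ℝ v ∧ (∀ t, 0 ≤ v t) ∧
  Differentiable ℝ φ ∧ (∀ t, φ t ∈ Set.Icc (0:ℝ) Real.pi) ∧
  Tendsto φ atBot (nhds 0) ∧ Tendsto φ atTop (nhds Real.pi) ∧
  Integrable (gInt β v φ)

noncomputable def sigmaBar (β : ℝ) : ℝ :=
  sInf {e : ℝ | ∃ v φ, Admissible β v φ ∧ e = Gbeta β v φ}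


namespace SigmaAux


lemma expIntOn (a : ℝ) (ha : 0 < a) : IntegrableOn (fun t : ℝ => exp (-(a*t))) (Ioi 0) := by
  simpa [neg_mul] using exp_neg_integrableOn_Ioi 0 ha

lemma int_Ioi_exp (a : ℝ) (ha : 0 < a) : ∫ t in Ioi (0:ℝ), exp (-(a*t)) = 1/a := by
  have h : ∀ x ∈ Ioi (0:ℝ), HasDerivAt (fun t => -exp (-(a*t)) / a) (exp (-(a*x))) x := by
    intro x _
    have h1 : HasDerivAt (fun t : ℝ => -(a*t)) (-a) x := by
      simpa [Pi.neg_def] using ((hasDerivAt_id x).const_mul a).neg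
    have h2 := (h1.exp).neg.div_const a
    refine h2.congr_deriv ?_
    field_simp
  have htend : Tendsto (fun t : ℝ => -exp (-(a*t)) / a) atTop (nhds 0) := by
    have : Tendsto (fun t : ℝ => -(a*t)) atTop atBot := by
      apply tendsto_neg_atBot_iff.mpr
      exact (tendsto_const_mul_atTop_of_pos ha).mpr tendsto_id
    have := (Real.tendsto_exp_atBot.comp this).neg.div_const a
    simpa using this
  have hcont : ContinuousWithinAt (fun t : ℝ => -exp (-(a*t)) / a) (Ici 0) 0 := by
    apply Continuous.continuousWithinAt
    continuity
  rw [integral_Ioi_of_hasDerivAt_of_tendsto hcont h (expIntOn a ha) htend]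
  simp [neg_div]

lemma integrable_exp_abs (a : ℝ) (ha : 0 < a) : Integrable (fun t : ℝ => exp (-(a*|t|))) := by
  have hf : IntegrableOn (fun x : ℝ => exp (-(a*|x|))) (Ioi 0) := by
    apply (expIntOn a ha).congr_fun _ measurableSet_Ioi
    intro x hx
    simp [abs_of_pos (show (0:ℝ) < x from hx)]
  have int_Iic : IntegrableOn (fun x : ℝ => exp (-(a*|x|))) (Iic 0) := by
    rw [← Measure.map_neg_eq_self (volume : Measure ℝ)]
    have m : MeasurableEmbedding fun x : ℝ => -x := (Homeomorph.neg ℝ).measurableEmbedding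
    rw [m.integrableOn_map_iff]
    simp_rw [Function.comp_def, abs_neg, neg_preimage, neg_Iic, neg_zero]
    exact (integrableOn_Ici_iff_integrableOn_Ioi).mpr hf
  rw [← integrableOn_univ, ← Iic_union_Ioi (a := (0:ℝ))]
  exact int_Iic.union hf

lemma int_exp_abs (a : ℝ) (ha : 0 < a) : ∫ t : ℝ, exp (-(a*|t|)) = 2/a := by
  have : ∫ t : ℝ, exp (-(a*|t|)) = 2 * ∫ t in Ioi (0:ℝ), exp (-(a*t)) :=
    integral_comp_abs (f := fun t => exp (-(a*t)))
  rw [this, int_Ioi_exp a ha]; ring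

lemma int_exp_abs_le (a : ℝ) (ha : 0 < a) : ∫ t : ℝ, exp (-(a*|t|)) ≤ 2/a :=
  le_of_eq (int_exp_abs a ha)



/-- `ss x = tanh (x/2)` written with `exp`. -/
noncomputable def ss (x : ℝ) : ℝ := 1 - 2 / (Real.exp x + 1)
noncomputable def gg (x : ℝ) : ℝ := 4 * Real.exp x / (Real.exp x + 1)^2

lemma exp_add_one_pos (x : ℝ) : 0 < Real.exp x + 1 := by positivity

lemma ss_nonneg {x : ℝ} (hx : 0 ≤ x) : 0 ≤ ss x := by
  have h1 : (1:ℝ) ≤ exp x := one_le_exp hx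
  have h2 : 0 < exp x + 1 := exp_add_one_pos x
  rw [ss, sub_nonneg, div_le_one h2]
  linarith

lemma ss_le_one (x : ℝ) : ss x ≤ 1 := by
  have h2 : 0 < exp x + 1 := exp_add_one_pos x
  have : 0 ≤ 2 / (exp x + 1) := by positivity
  simp only [ss]; linarith

lemma neg_one_le_ss (x : ℝ) : -1 ≤ ss x := by
  have h2 : 0 < exp x + 1 := exp_add_one_pos x
  have : 2 / (exp x + 1) ≤ 2 := by
    rw [div_le_iff₀ h2]; nlinarith [exp_pos x]
  simp only [ss]; linarith

lemma one_sub_ss_sq (x : ℝ) : 1 - (ss x)^2 = gg x := by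
  have h2 : exp x + 1 ≠ 0 := ne_of_gt (exp_add_one_pos x)
  rw [ss, gg]
  field_simp
  ring

lemma ss_le {x : ℝ} (hx : 0 ≤ x) : ss x ≤ x * Real.exp x / 2 := by
  have h1 : (1:ℝ) ≤ exp x := one_le_exp hx
  have h2 : 0 < exp x + 1 := exp_add_one_pos x
  have key : ss x = (exp x - 1) / (exp x + 1) := by
    rw [ss]; field_simp; ring
  rw [key]
  have h3 : (exp x - 1) / (exp x + 1) ≤ (exp x - 1) / 2 := by
    apply div_le_div_of_nonneg_left (by linarith) (by norm_num) (by linarith)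
  have h4 : exp x - 1 ≤ x * exp x := by
    have hb := add_one_le_exp (-x)
    have hab : exp x * exp (-x) = 1 := by rw [← Real.exp_add]; simp
    nlinarith [mul_le_mul_of_nonneg_left hb (exp_pos x).le]
  calc (exp x - 1) / (exp x + 1) ≤ (exp x - 1)/2 := h3
    _ ≤ x * exp x / 2 := by linarith

lemma hasDerivAt_ss (x : ℝ) : HasDerivAt ss (gg x / 2) x := by
  have h2 : exp x + 1 ≠ 0 := ne_of_gt (exp_add_one_pos x)
  have h : HasDerivAt (fun y : ℝ => 1 - 2 / (Real.exp y + 1)) (gg x / 2) x := by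
    have hd : HasDerivAt (fun y : ℝ => Real.exp y + 1) (Real.exp x) x :=
      (Real.hasDerivAt_exp x).add_const 1
    have := ((hd.inv h2).const_mul 2).const_sub 1
    refine this.congr_deriv ?_
    rw [gg]
    field_simp
    ring
  exact h

lemma gg_nonneg (x : ℝ) : 0 ≤ gg x := by
  rw [gg]; positivity

lemma gg_even (x : ℝ) : gg (-x) = gg x := by
  rw [gg, gg, Real.exp_neg]
  have h := exp_pos x
  field_simp
  ring

lemma gg_anti {x y : ℝ} (hx : 0 ≤ x) (hxy : x ≤ y) : gg y ≤ gg x := by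
  have h1 : (1:ℝ) ≤ exp x := one_le_exp hx
  have h2 : exp x ≤ exp y := exp_le_exp.mpr hxy
  have h3 : 0 < exp x := exp_pos x
  have h4 : 0 < exp y := exp_pos y
  rw [gg, gg, div_le_div_iff₀ (by positivity) (by positivity)]
  nlinarith [mul_le_mul_of_nonneg_left h2 (le_of_lt h3)]

lemma gg_le {x : ℝ} (hx : 0 ≤ x) : gg x ≤ 4 * Real.exp (-x) := by
  have h3 : 0 < exp x := exp_pos x
  have h5 : Real.exp (-x) = (Real.exp x)⁻¹ := Real.exp_neg x
  rw [gg, h5, div_le_iff₀ (by positivity)]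
  have : exp x * exp x ≤ (exp x + 1)^2 := by nlinarith
  calc 4 * exp x = 4 * (exp x)⁻¹ * (exp x * exp x) := by field_simp
    _ ≤ 4 * (exp x)⁻¹ * (exp x + 1)^2 := by
        apply mul_le_mul_of_nonneg_left this (by positivity)
    _ = 4 * (exp x)⁻¹ * (exp x + 1)^2 := rfl

lemma continuous_ss : Continuous ss := by
  apply Continuous.sub continuous_const
  apply Continuous.div continuous_const (by continuity)
  intro x; exact ne_of_gt (exp_add_one_pos x)

lemma continuous_gg : Continuous gg := by
  apply Continuous.div (by continuity) (by continuity)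
  intro x; positivity




-- assume previous lemmas; restate as axioms for speed of iteration? No, just import by copy later.
-- Here develop: ww, psi, rr, vv

noncomputable def ww (t : ℝ) : ℝ := ss (Real.sqrt 2 * t)
noncomputable def psi (t : ℝ) : ℝ := (gg (Real.sqrt 2 * t))^2
noncomputable def rr (k t : ℝ) : ℝ := Real.sqrt (t^2 + (k⁻¹)^2)
noncomputable def vv (k t : ℝ) : ℝ := ss (Real.sqrt 2 * rr k t)
noncomputable def vd (k t : ℝ) : ℝ := (t / rr k t) * (Real.sqrt 2 * (gg (Real.sqrt 2 * rr k t) / 2))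

section
variable {k : ℝ} (hk : 0 < k)
include hk

lemma rr_pos (t : ℝ) : 0 < rr k t := by
  rw [rr]
  apply Real.sqrt_pos.mpr
  have : (0:ℝ) < (k⁻¹)^2 := by
    have : k⁻¹ ≠ 0 := inv_ne_zero (ne_of_gt hk)
    positivity
  positivity

lemma abs_le_rr (t : ℝ) : |t| ≤ rr k t := by
  rw [rr, ← Real.sqrt_sq_eq_abs]
  apply Real.sqrt_le_sqrt
  nlinarith [sq_nonneg (k⁻¹)]

lemma rr_le (t : ℝ) : rr k t ≤ |t| + k⁻¹ := by
  rw [rr]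
  have h1 : 0 ≤ k⁻¹ := by positivity
  have hnn : 0 ≤ |t| + k⁻¹ := by positivity
  have : t^2 + (k⁻¹)^2 ≤ (|t| + k⁻¹)^2 := by
    nlinarith [abs_nonneg t, sq_abs t]
  calc Real.sqrt (t^2 + (k⁻¹)^2) ≤ Real.sqrt ((|t| + k⁻¹)^2) := Real.sqrt_le_sqrt this
    _ = |t| + k⁻¹ := Real.sqrt_sq hnn

lemma hasDerivAt_rr (t : ℝ) : HasDerivAt (rr k) (t / rr k t) t := by
  have h1 : HasDerivAt (fun t : ℝ => t^2 + (k⁻¹)^2) (2*t) t := by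
    have := (hasDerivAt_pow 2 t).add_const ((k⁻¹)^2)
    refine this.congr_deriv ?_
    push_cast
    ring
  have h2 : t^2 + (k⁻¹)^2 ≠ 0 := by
    have := rr_pos hk t
    rw [rr] at this
    intro h
    rw [h] at this
    simp at this
  have := (Real.hasDerivAt_sqrt h2).comp t h1
  refine this.congr_deriv ?_
  rw [rr]
  field_simp

lemma continuous_rr : Continuous (rr k) := by
  apply Real.continuous_sqrt.comp
  continuity

end


lemma sqrt2_pos : (0:ℝ) < Real.sqrt 2 := by positivity
lemma one_le_sqrt2 : (1:ℝ) ≤ Real.sqrt 2 := by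
  nlinarith [Real.sq_sqrt (by norm_num : (2:ℝ) ≥ 0), Real.sqrt_nonneg 2]

lemma hasDerivAt_ww (t : ℝ) :
    HasDerivAt ww (Real.sqrt 2 * (gg (Real.sqrt 2 * t) / 2)) t := by
  have h := (hasDerivAt_ss (Real.sqrt 2 * t)).comp t
    ((hasDerivAt_id t).const_mul (Real.sqrt 2))
  unfold ww
  simpa [ww, mul_comm, Function.comp_def] using h

lemma ww_tendsto_atTop : Tendsto ww atTop (nhds 1) := by
  have h1 : Tendsto (fun t : ℝ => Real.sqrt 2 * t) atTop atTop :=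
    (tendsto_const_mul_atTop_of_pos sqrt2_pos).mpr tendsto_id
  have h2 : Tendsto (fun x : ℝ => Real.exp x + 1) atTop atTop :=
    tendsto_exp_atTop.atTop_add tendsto_const_nhds
  have h3 : Tendsto (fun x : ℝ => 2 / (Real.exp x + 1)) atTop (nhds 0) :=
    Tendsto.div_atTop tendsto_const_nhds h2
  have h4 : Tendsto ss atTop (nhds 1) := by
    have := (tendsto_const_nhds (x := (1:ℝ)) (f := atTop)).sub h3
    unfold ss
    simpa [ss] using this
  exact h4.comp h1

lemma ww_tendsto_atBot : Tendsto ww atBot (nhds (-1)) := by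
  have h1 : Tendsto (fun t : ℝ => Real.sqrt 2 * t) atBot atBot := by
    exact (tendsto_const_mul_atBot_of_pos sqrt2_pos).mpr tendsto_id
  have h2 : Tendsto (fun x : ℝ => Real.exp x + 1) atBot (nhds 1) := by
    simpa using Real.tendsto_exp_atBot.add tendsto_const_nhds
  have h3 : Tendsto (fun x : ℝ => 2 / (Real.exp x + 1)) atBot (nhds 2) := by
    have := (tendsto_const_nhds (x := (2:ℝ)) (f := atBot)).div h2 (by norm_num)
    rw [div_one] at this; exact this
  have h4 : Tendsto ss atBot (nhds (-1)) := by
    have := (tendsto_const_nhds (x := (1:ℝ)) (f := atBot)).sub h3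
    norm_num at this
    unfold ss
    simpa [ss] using this
  exact h4.comp h1

noncomputable def Phi (t : ℝ) : ℝ := Real.sqrt 2 * (ww t - (ww t)^3/3)

lemma hasDerivAt_Phi (t : ℝ) : HasDerivAt Phi (psi t) t := by
  have hw := hasDerivAt_ww t
  have h1 : HasDerivAt (fun t => ww t - (ww t)^3/3)
      ((Real.sqrt 2 * (gg (Real.sqrt 2 * t) / 2)) -
        (3 * (ww t)^2 * (Real.sqrt 2 * (gg (Real.sqrt 2 * t) / 2)))/3) t := by
    exact hw.sub ((((hw.pow 3)).div_const 3))
  have h2 := h1.const_mul (Real.sqrt 2)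
  refine h2.congr_deriv ?_
  have hsq : Real.sqrt 2 * Real.sqrt 2 = 2 := Real.mul_self_sqrt (by norm_num)
  have hww : 1 - (ww t)^2 = gg (Real.sqrt 2 * t) := one_sub_ss_sq _
  have expand : Real.sqrt 2 * (Real.sqrt 2 * (gg (Real.sqrt 2*t) / 2) -
      3 * (ww t)^2 * (Real.sqrt 2 * (gg (Real.sqrt 2*t) / 2))/3)
      = (Real.sqrt 2 * Real.sqrt 2) * (gg (Real.sqrt 2*t)/2) * (1 - (ww t)^2) := by ring
  rw [psi, expand, hsq, hww]
  ring

lemma continuous_psi : Continuous psi := by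
  apply Continuous.pow
  exact continuous_gg.comp (continuous_const.mul continuous_id)

lemma psi_nonneg (t : ℝ) : 0 ≤ psi t := sq_nonneg _

lemma psi_le (t : ℝ) : psi t ≤ 16 * Real.exp (-(2*|t|)) := by
  have heven : gg (Real.sqrt 2 * t) = gg (Real.sqrt 2 * |t|) := by
    rcases abs_cases t with ⟨h, _⟩ | ⟨h, _⟩
    · rw [h]
    · rw [h, mul_neg, gg_even]
  have h1 : gg (Real.sqrt 2 * |t|) ≤ 4 * Real.exp (-(Real.sqrt 2 * |t|)) :=
    gg_le (by positivity)
  have h2 : Real.exp (-(Real.sqrt 2 * |t|)) ≤ Real.exp (-(1*|t|)) := by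
    apply Real.exp_le_exp.mpr
    have := abs_nonneg t
    nlinarith [one_le_sqrt2]
  have h0 : 0 ≤ gg (Real.sqrt 2 * |t|) := gg_nonneg _
  rw [psi, heven]
  calc (gg (Real.sqrt 2 * |t|))^2 ≤ (4 * Real.exp (-(Real.sqrt 2 * |t|)))^2 := by
        apply sq_le_sq' (by nlinarith [Real.exp_pos (-(Real.sqrt 2 * |t|))]) h1
    _ = 16 * Real.exp (-(Real.sqrt 2 * |t|)) * Real.exp (-(Real.sqrt 2 * |t|)) := by ring
    _ ≤ 16 * Real.exp (-(1*|t|)) * Real.exp (-(1*|t|)) := by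
        apply mul_le_mul (by nlinarith [Real.exp_pos (-(Real.sqrt 2 * |t|))]) h2
          (Real.exp_pos _).le (by positivity)
    _ = 16 * Real.exp (-(2*|t|)) := by
        have he : Real.exp (-(1*|t|)) * Real.exp (-(1*|t|)) = Real.exp (-(2*|t|)) := by
          rw [← Real.exp_add]; ring_nf
        rw [mul_assoc, he]
    
lemma integrable_psi : Integrable psi := by
  apply Integrable.mono' ((integrable_exp_abs 2 (by norm_num)).const_mul 16)
    continuous_psi.aestronglyMeasurable
  filter_upwards with t
  rw [Real.norm_eq_abs, abs_of_nonneg (psi_nonneg t)]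
  simpa [neg_mul] using psi_le t

lemma continuous_Phi : Continuous Phi := by
  apply continuous_const.mul
  exact (continuous_ss.comp (continuous_const.mul continuous_id)).sub
    (((continuous_ss.comp (continuous_const.mul continuous_id)).pow 3).div_const 3)

lemma Phi_tendsto_atTop : Tendsto Phi atTop (nhds (2 * Real.sqrt 2/3)) := by
  have h := (ww_tendsto_atTop.sub ((ww_tendsto_atTop.pow 3).div_const 3)).const_mul (Real.sqrt 2)
  have e : Real.sqrt 2 * (1 - 1^3/3) = 2 * Real.sqrt 2/3 := by ring
  rw [e] at h
  exact h

lemma Phi_tendsto_atBot : Tendsto Phi atBot (nhds (-(2 * Real.sqrt 2/3))) := by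
  have h := (ww_tendsto_atBot.sub ((ww_tendsto_atBot.pow 3).div_const 3)).const_mul (Real.sqrt 2)
  have e : Real.sqrt 2 * ((-1) - (-1)^3/3) = -(2 * Real.sqrt 2/3) := by ring
  rw [e] at h
  exact h

lemma int_psi : ∫ t : ℝ, psi t = 4 * Real.sqrt 2 / 3 := by
  have hIoi := integral_Ioi_of_hasDerivAt_of_tendsto
    (continuous_Phi.continuousWithinAt) (fun x (_ : x ∈ Ioi (0:ℝ)) => hasDerivAt_Phi x)
    integrable_psi.integrableOn Phi_tendsto_atTop
  have hIic := integral_Iic_of_hasDerivAt_of_tendsto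
    (continuous_Phi.continuousWithinAt) (fun x (_ : x ∈ Iio (0:ℝ)) => hasDerivAt_Phi x)
    integrable_psi.integrableOn Phi_tendsto_atBot
  rw [← intervalIntegral.integral_Iic_add_Ioi integrable_psi.integrableOn
    integrable_psi.integrableOn, hIoi, hIic]
  ring



noncomputable def pp (k t : ℝ) : ℝ := Real.pi / (1 + Real.exp (-(k * t)))
noncomputable def pd (k t : ℝ) : ℝ :=
  Real.pi * k * Real.exp (-(k*t)) / (1 + Real.exp (-(k*t)))^2

lemma one_add_exp_pos (x : ℝ) : 0 < 1 + Real.exp x := by positivity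

section
variable {k : ℝ} (hk : 0 < k)
include hk

lemma hasDerivAt_vv (t : ℝ) : HasDerivAt (vv k) (vd k t) t := by
  have h1 : HasDerivAt (fun t : ℝ => Real.sqrt 2 * rr k t)
      (Real.sqrt 2 * (t / rr k t)) t := (hasDerivAt_rr hk t).const_mul _
  have h2 := (hasDerivAt_ss (Real.sqrt 2 * rr k t)).comp t h1
  have e : gg (Real.sqrt 2 * rr k t) / 2 * (Real.sqrt 2 * (t / rr k t)) = vd k t := by
    rw [vd]; ring
  rw [← e]
  exact h2

lemma vv_nonneg (t : ℝ) : 0 ≤ vv k t :=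
  ss_nonneg (mul_nonneg (Real.sqrt_nonneg 2) (rr_pos hk t).le)

omit hk in
lemma vv_le_one (t : ℝ) : vv k t ≤ 1 := ss_le_one _

omit hk in
lemma one_sub_vv_sq (t : ℝ) : 1 - (vv k t)^2 = gg (Real.sqrt 2 * rr k t) := one_sub_ss_sq _

lemma div_rr_sq_le (t : ℝ) : (t / rr k t)^2 ≤ 1 := by
  have hr := rr_pos hk t
  rw [div_pow, div_le_one (pow_pos hr 2)]
  nlinarith [abs_le_rr hk t, abs_nonneg t, sq_abs t]

lemma vd_sq_le (t : ℝ) : (vd k t)^2 ≤ (gg (Real.sqrt 2 * rr k t))^2 / 2 := by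
  have h1 := div_rr_sq_le hk t
  have hsq : (Real.sqrt 2)^2 = 2 := Real.sq_sqrt (by norm_num)
  have h0 : 0 ≤ (gg (Real.sqrt 2 * rr k t))^2 := sq_nonneg _
  rw [vd]
  have expand : ((t / rr k t) * (Real.sqrt 2 * (gg (Real.sqrt 2 * rr k t) / 2)))^2
      = (t / rr k t)^2 * ((Real.sqrt 2)^2 * (gg (Real.sqrt 2 * rr k t))^2 / 4) := by ring
  rw [expand, hsq]
  nlinarith [mul_le_mul_of_nonneg_right h1 h0]

lemma vpart_le (t : ℝ) : (vd k t)^2 + (1 - (vv k t)^2)^2/2 ≤ psi t := by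
  have h1 := vd_sq_le hk t
  have h2 := one_sub_vv_sq (k := k) t
  have h3 : gg (Real.sqrt 2 * rr k t) ≤ gg (Real.sqrt 2 * |t|) :=
    gg_anti (by positivity)
      (mul_le_mul_of_nonneg_left (abs_le_rr hk t) (Real.sqrt_nonneg 2))
  have heven : gg (Real.sqrt 2 * t) = gg (Real.sqrt 2 * |t|) := by
    rcases abs_cases t with ⟨h, _⟩ | ⟨h, _⟩
    · rw [h]
    · rw [h, mul_neg, gg_even]
  have h4 : (gg (Real.sqrt 2 * rr k t))^2 ≤ psi t := by
    rw [psi, heven]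
    have h0 := gg_nonneg (Real.sqrt 2 * rr k t)
    nlinarith
  rw [h2]
  nlinarith [sq_nonneg (gg (Real.sqrt 2 * rr k t))]

lemma vv_le_rexp (t : ℝ) :
    vv k t ≤ (Real.sqrt 2 * rr k t) * Real.exp (Real.sqrt 2 * rr k t) / 2 := by
  apply ss_le
  exact mul_nonneg (Real.sqrt_nonneg 2) (rr_pos hk t).le

omit hk in
lemma pp_pos (t : ℝ) : 0 < pp k t := by
  rw [pp]
  have := one_add_exp_pos (-(k*t))
  have := Real.pi_pos
  positivity

omit hk in
lemma pp_lt_pi (t : ℝ) : pp k t < Real.pi := by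
  rw [pp]
  have h := one_add_exp_pos (-(k*t))
  rw [div_lt_iff₀ h]
  nlinarith [Real.exp_pos (-(k*t)), Real.pi_pos]

omit hk in
lemma hasDerivAt_pp (t : ℝ) : HasDerivAt (pp k) (pd k t) t := by
  have h1 : HasDerivAt (fun t : ℝ => 1 + Real.exp (-(k*t))) (-k * Real.exp (-(k*t))) t := by
    have h0 : HasDerivAt (fun t : ℝ => -(k*t)) (-k) t := by
      simpa [Pi.neg_def] using ((hasDerivAt_id t).const_mul k).neg
    simpa [mul_comm] using (h0.exp).const_add 1
  have h2 : (1 + Real.exp (-(k*t))) ≠ 0 := ne_of_gt (one_add_exp_pos _)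
  have h3 := (h1.inv h2).const_mul Real.pi
  have hpp : pp k = fun t : ℝ => Real.pi * (1 + Real.exp (-(k*t)))⁻¹ := by
    funext x; rw [pp, div_eq_mul_inv]
  have e : Real.pi * (-(-k * Real.exp (-(k*t))) / (1 + Real.exp (-(k*t)))^2) = pd k t := by
    rw [pd]; ring
  rw [hpp, ← e]
  exact h3

lemma pd_nonneg (t : ℝ) : 0 ≤ pd k t := by
  rw [pd]
  apply div_nonneg _ (by positivity)
  have h := mul_pos (mul_pos Real.pi_pos hk) (Real.exp_pos (-(k*t)))
  linarith

lemma pd_le (t : ℝ) : pd k t ≤ Real.pi * k * Real.exp (-(k * |t|)) := by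
  have hpik : 0 < Real.pi * k := mul_pos Real.pi_pos hk
  set E := Real.exp (-(k*t)) with hE
  have hEpos : 0 < E := Real.exp_pos _
  rcases le_or_gt 0 t with ht | ht
  · have habs : Real.exp (-(k * |t|)) = E := by rw [abs_of_nonneg ht]
    rw [pd, habs, div_le_iff₀ (by positivity)]
    nlinarith [mul_pos (mul_pos hpik hEpos) hEpos,
      mul_pos (mul_pos (mul_pos hpik hEpos) hEpos) hEpos]
  · have habs : Real.exp (-(k * |t|)) = E⁻¹ := by
      rw [abs_of_neg ht, ← Real.exp_neg]
      congr 1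
      ring
    rw [pd, habs, div_le_iff₀ (by positivity)]
    have e2 : Real.pi * k * E⁻¹ * (1+E)^2 = Real.pi * k * (E⁻¹ + 2 + E) := by
      field_simp
      ring
    rw [e2]
    nlinarith [mul_pos hpik (inv_pos.mpr hEpos), hpik]

omit hk in
lemma sin_pp_le (t : ℝ) : Real.sin (pp k t) ≤ Real.pi * Real.exp (-(k * |t|)) := by
  have hpi := Real.pi_pos
  set E := Real.exp (-(k*t)) with hE
  have hEpos : 0 < E := Real.exp_pos _
  have h1E : 0 < 1 + E := by positivity
  rcases le_or_gt 0 t with ht | ht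
  · have habs : Real.exp (-(k * |t|)) = E := by rw [abs_of_nonneg ht]
    rw [habs]
    have h2 : Real.sin (pp k t) = Real.sin (Real.pi - pp k t) := (Real.sin_pi_sub _).symm
    have h3 : Real.pi - pp k t ≤ Real.pi * E := by
      rw [pp]
      have h4 : Real.pi - Real.pi / (1 + E) = Real.pi * E / (1 + E) := by
        field_simp
        ring
      rw [show Real.pi - Real.pi / (1 + Real.exp (-(k*t))) = Real.pi * E / (1+E) from h4,
        div_le_iff₀ h1E]
      nlinarith [mul_pos (mul_pos hpi hEpos) hEpos]
    calc Real.sin (pp k t) = Real.sin (Real.pi - pp k t) := h2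
      _ ≤ Real.pi - pp k t := Real.sin_le (by nlinarith [pp_lt_pi (k := k) t])
      _ ≤ Real.pi * E := h3
  · have habs : Real.exp (-(k * |t|)) = E⁻¹ := by
      rw [abs_of_neg ht, ← Real.exp_neg]
      congr 1
      ring
    rw [habs]
    have h3 : pp k t ≤ Real.pi * E⁻¹ := by
      rw [pp, div_le_iff₀ h1E]
      have e4 : Real.pi * E⁻¹ * (1+E) = Real.pi * (E⁻¹ + 1) := by
        field_simp
      rw [e4]
      have h6 := mul_pos hpi (inv_pos.mpr hEpos)
      nlinarith
    calc Real.sin (pp k t) ≤ pp k t := Real.sin_le (pp_pos (k := k) t).le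
      _ ≤ Real.pi * E⁻¹ := h3

lemma pp_tendsto_atBot : Tendsto (pp k) atBot (nhds 0) := by
  have h1 : Tendsto (fun t : ℝ => -(k * t)) atBot atTop := by
    apply tendsto_neg_atTop_iff.mpr
    exact (tendsto_const_mul_atBot_of_pos hk).mpr tendsto_id
  have h2 : Tendsto (fun t : ℝ => 1 + Real.exp (-(k * t))) atBot atTop :=
    tendsto_atTop_add_const_left _ 1 (Real.tendsto_exp_atTop.comp h1)
  exact Tendsto.div_atTop tendsto_const_nhds h2

lemma pp_tendsto_atTop : Tendsto (pp k) atTop (nhds Real.pi) := by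
  have h1 : Tendsto (fun t : ℝ => -(k * t)) atTop atBot := by
    apply tendsto_neg_atBot_iff.mpr
    exact (tendsto_const_mul_atTop_of_pos hk).mpr tendsto_id
  have h2 : Tendsto (fun t : ℝ => 1 + Real.exp (-(k * t))) atTop (nhds 1) := by
    simpa using (Real.tendsto_exp_atBot.comp h1).const_add 1
  have h3 := (tendsto_const_nhds (x := Real.pi) (f := atTop)).div h2 (by norm_num)
  rw [div_one] at h3; exact h3

omit hk in
lemma continuous_pp : Continuous (pp k) := by
  apply Continuous.div continuous_const (by continuity)
  intro x; exact ne_of_gt (one_add_exp_pos _)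

lemma continuous_vd : Continuous (vd k) := by
  apply Continuous.mul
  · exact (continuous_id.div (continuous_rr hk) (fun t => ne_of_gt (rr_pos hk t)))
  · exact continuous_const.mul
      ((continuous_gg.comp (continuous_const.mul (continuous_rr hk))).div_const 2)

omit hk in
lemma continuous_pd : Continuous (pd k) := by
  apply Continuous.div (by continuity) (by continuity)
  intro x
  exact ne_of_gt (pow_pos (one_add_exp_pos _) 2)

lemma continuous_vv : Continuous (vv k) :=
  continuous_ss.comp (continuous_const.mul (continuous_rr hk))

end


lemma t_sq_exp {c : ℝ} (hc : 0 < c) (t : ℝ) :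
    t^2 * Real.exp (-(2*c*|t|)) ≤ (2/c^2) * Real.exp (-(c*|t|)) := by
  have hx : (0:ℝ) ≤ c*|t| := by positivity
  have h1 : (c*|t|)^2 ≤ 2 * Real.exp (c*|t|) := by
    nlinarith [Real.quadratic_le_exp_of_nonneg hx]
  have h4 : t^2 ≤ (2/c^2) * Real.exp (c*|t|) := by
    rw [div_mul_eq_mul_div, le_div_iff₀ (by positivity)]
    calc t^2 * c^2 = (c*|t|)^2 := by rw [mul_pow, sq_abs]; ring
      _ ≤ 2 * Real.exp (c*|t|) := h1
  have h5 : Real.exp (c*|t|) * Real.exp (-(2*c*|t|)) = Real.exp (-(c*|t|)) := by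
    rw [← Real.exp_add]; ring_nf
  calc t^2 * Real.exp (-(2*c*|t|))
      ≤ ((2/c^2) * Real.exp (c*|t|)) * Real.exp (-(2*c*|t|)) :=
        mul_le_mul_of_nonneg_right h4 (Real.exp_pos _).le
    _ = (2/c^2) * (Real.exp (c*|t|) * Real.exp (-(2*c*|t|))) := by ring
    _ = (2/c^2) * Real.exp (-(c*|t|)) := by rw [h5]

section
variable {k : ℝ}

set_option maxHeartbeats 1000000 in
lemma phi1_le (hk3 : 3 ≤ k) (t : ℝ) :
    (vv k t)^2 * (pd k t)^2 / 4 ≤ 900 * Real.exp (-(k/2*|t|)) := by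
  have hk0 : (0:ℝ) < k := by linarith
  have ha : (0:ℝ) ≤ |t| := abs_nonneg t
  have hrpos := rr_pos hk0 t
  have hr2 : (rr k t)^2 = t^2 + (k⁻¹)^2 := by
    rw [rr]
    exact Real.sq_sqrt (by positivity)
  have hkinv1 : k⁻¹ ≤ 1 := inv_le_one_of_one_le₀ (by linarith)
  have hs2 : Real.sqrt 2 ≤ 3/2 := by
    nlinarith [Real.sq_sqrt (by norm_num : (0:ℝ) ≤ 2), Real.sqrt_nonneg 2]
  have hvv : (vv k t)^2 ≤ ((t^2 + (k⁻¹)^2)/2) * (Real.exp 3 * Real.exp (3*|t|)) := by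
    have hb := pow_le_pow_left₀ (vv_nonneg hk0 t) (vv_le_rexp hk0 t) 2
    have hexpsq : (Real.exp (Real.sqrt 2 * rr k t))^2 = Real.exp (2*(Real.sqrt 2*rr k t)) := by
      rw [sq, ← Real.exp_add]; ring_nf
    have e5 : (Real.sqrt 2 * rr k t * Real.exp (Real.sqrt 2 * rr k t)/2)^2
        = ((rr k t)^2/2) * Real.exp (2*(Real.sqrt 2*rr k t)) := by
      rw [← hexpsq, div_pow, mul_pow, mul_pow, Real.sq_sqrt (by norm_num : (0:ℝ) ≤ 2)]
      ring
    have hexp3 : Real.exp (2*(Real.sqrt 2*rr k t)) ≤ Real.exp 3 * Real.exp (3*|t|) := by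
      rw [← Real.exp_add]
      apply Real.exp_le_exp.mpr
      have h6 : rr k t ≤ |t| + 1 := le_trans (rr_le hk0 t) (by linarith)
      nlinarith [Real.sqrt_nonneg 2]
    calc (vv k t)^2 ≤ (Real.sqrt 2 * rr k t * Real.exp (Real.sqrt 2 * rr k t)/2)^2 := hb
      _ = ((rr k t)^2/2) * Real.exp (2*(Real.sqrt 2*rr k t)) := e5
      _ ≤ ((rr k t)^2/2) * (Real.exp 3 * Real.exp (3*|t|)) :=
          mul_le_mul_of_nonneg_left hexp3 (by positivity)
      _ = ((t^2 + (k⁻¹)^2)/2) * (Real.exp 3 * Real.exp (3*|t|)) := by rw [hr2]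
  have hpd : (pd k t)^2 ≤ Real.pi^2 * k^2 * Real.exp (-(2*k*|t|)) := by
    have hb := pow_le_pow_left₀ (pd_nonneg hk0 t) (pd_le hk0 t) 2
    calc (pd k t)^2 ≤ (Real.pi * k * Real.exp (-(k*|t|)))^2 := hb
      _ = Real.pi^2 * k^2 * (Real.exp (-(k*|t|)))^2 := by ring
      _ = Real.pi^2 * k^2 * Real.exp (-(2*k*|t|)) := by
          rw [sq (Real.exp (-(k*|t|))), ← Real.exp_add]
          ring_nf
  have step1 : (vv k t)^2 * (pd k t)^2/4
      ≤ (((t^2 + (k⁻¹)^2)/2) * (Real.exp 3 * Real.exp (3*|t|)))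
        * (Real.pi^2*k^2*Real.exp (-(2*k*|t|)))/4 := by
    have h := mul_le_mul hvv hpd (sq_nonneg _) (by positivity)
    linarith
  have step2 : (((t^2 + (k⁻¹)^2)/2) * (Real.exp 3 * Real.exp (3*|t|)))
        * (Real.pi^2*k^2*Real.exp (-(2*k*|t|)))/4
      = (Real.pi^2*k^2*Real.exp 3/8) * ((t^2 + (k⁻¹)^2)
          * (Real.exp (3*|t|) * Real.exp (-(2*k*|t|)))) := by ring
  have step3 : Real.exp (3*|t|) * Real.exp (-(2*k*|t|)) ≤ Real.exp (-(k*|t|)) := by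
    rw [← Real.exp_add]
    apply Real.exp_le_exp.mpr
    nlinarith
  have step4 : (t^2 + (k⁻¹)^2) * Real.exp (-(k*|t|)) ≤ (9/k^2) * Real.exp (-(k/2*|t|)) := by
    have hz : t^2 * Real.exp (-(2*(k/2)*|t|)) ≤ 2/(k/2)^2 * Real.exp (-(k/2*|t|)) :=
      t_sq_exp (by linarith) t
    have e6 : -(2*(k/2)*|t|) = -(k*|t|) := by ring
    have e7 : (2:ℝ)/(k/2)^2 = 8/k^2 := by
      field_simp
      ring
    rw [e6, e7] at hz
    have hz' : t^2 * Real.exp (-(k*|t|)) ≤ 8/k^2 * Real.exp (-(k/2*|t|)) := hz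
    have hmono : Real.exp (-(k*|t|)) ≤ Real.exp (-(k/2*|t|)) := by
      apply Real.exp_le_exp.mpr
      nlinarith
    have hinv : (k⁻¹)^2 * Real.exp (-(k*|t|)) ≤ 1/k^2 * Real.exp (-(k/2*|t|)) := by
      have e8 : (k⁻¹)^2 = 1/k^2 := by field_simp
      rw [e8]
      exact mul_le_mul_of_nonneg_left hmono (by positivity)
    have expand : (t^2 + (k⁻¹)^2) * Real.exp (-(k*|t|))
        = t^2 * Real.exp (-(k*|t|)) + (k⁻¹)^2 * Real.exp (-(k*|t|)) := by ring
    rw [expand]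
    have : (9:ℝ)/k^2 * Real.exp (-(k/2*|t|))
        = 8/k^2 * Real.exp (-(k/2*|t|)) + 1/k^2 * Real.exp (-(k/2*|t|)) := by ring
    rw [this]
    exact add_le_add hz' hinv
  have hconst : Real.pi^2*k^2*Real.exp 3/8 * (9/k^2) ≤ 900 := by
    have hpi2 : Real.pi ^ 2 ≤ 10 := by nlinarith [Real.pi_lt_d2, Real.pi_pos]
    have hexp3 : Real.exp 3 ≤ 21 := by
      have h1 : Real.exp 1 < 2.72 := lt_trans Real.exp_one_lt_d9 (by norm_num)
      have h0 : (0:ℝ) < Real.exp 1 := Real.exp_pos 1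
      have h2 : Real.exp 1 * Real.exp 1 < 7.4 := by nlinarith
      have h3 : Real.exp 3 = Real.exp 1 * Real.exp 1 * Real.exp 1 := by
        rw [← Real.exp_add, ← Real.exp_add]
        norm_num
      rw [h3]
      nlinarith
    have e9 : Real.pi^2*k^2*Real.exp 3/8 * (9/k^2) = Real.pi^2*Real.exp 3*(9/8) := by
      field_simp
    rw [e9]
    nlinarith [Real.exp_pos 3, sq_nonneg Real.pi, Real.pi_pos]
  calc (vv k t)^2 * (pd k t)^2/4
      ≤ (((t^2 + (k⁻¹)^2)/2) * (Real.exp 3 * Real.exp (3*|t|)))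
        * (Real.pi^2*k^2*Real.exp (-(2*k*|t|)))/4 := step1
    _ = (Real.pi^2*k^2*Real.exp 3/8) * ((t^2 + (k⁻¹)^2)
          * (Real.exp (3*|t|) * Real.exp (-(2*k*|t|)))) := step2
    _ ≤ (Real.pi^2*k^2*Real.exp 3/8) * ((t^2 + (k⁻¹)^2) * Real.exp (-(k*|t|))) := by
        apply mul_le_mul_of_nonneg_left _ (by positivity)
        exact mul_le_mul_of_nonneg_left step3 (by positivity)
    _ ≤ (Real.pi^2*k^2*Real.exp 3/8) * ((9/k^2) * Real.exp (-(k/2*|t|))) := by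
        apply mul_le_mul_of_nonneg_left step4 (by positivity)
    _ = (Real.pi^2*k^2*Real.exp 3/8 * (9/k^2)) * Real.exp (-(k/2*|t|)) := by ring
    _ ≤ 900 * Real.exp (-(k/2*|t|)) :=
        mul_le_mul_of_nonneg_right hconst (Real.exp_pos _).le

lemma phi2_le {β : ℝ} (hβ : 0 < β) (hk3 : 3 ≤ k) (t : ℝ) :
    (β/4) * (vv k t)^4 * (Real.sin (pp k t))^2 ≤ 3*β*Real.exp (-(k/2*|t|)) := by
  have hk0 : (0:ℝ) < k := by linarith
  have hv1 : (vv k t)^4 ≤ 1 :=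
    pow_le_one₀ (vv_nonneg hk0 t) (vv_le_one (k := k) t)
  have hv0 : (0:ℝ) ≤ (vv k t)^4 := by positivity
  have hsin : (Real.sin (pp k t))^2 ≤ Real.pi^2 * Real.exp (-(2*k*|t|)) := by
    have hb : Real.sin (pp k t) ≤ Real.pi * Real.exp (-(k*|t|)) := sin_pp_le (k := k) t
    have hsnn : 0 ≤ Real.sin (pp k t) := by
      apply Real.sin_nonneg_of_nonneg_of_le_pi (pp_pos (k := k) t).le (pp_lt_pi (k := k) t).le
    calc (Real.sin (pp k t))^2 ≤ (Real.pi * Real.exp (-(k*|t|)))^2 := pow_le_pow_left₀ hsnn hb 2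
      _ = Real.pi^2 * Real.exp (-(2*k*|t|)) := by
          rw [mul_pow, sq (Real.exp (-(k*|t|))), ← Real.exp_add]
          ring_nf
  have hmono : Real.exp (-(2*k*|t|)) ≤ Real.exp (-(k/2*|t|)) := by
    apply Real.exp_le_exp.mpr
    nlinarith [abs_nonneg t]
  have hpi2 : Real.pi ^ 2 ≤ 10 := by nlinarith [Real.pi_lt_d2, Real.pi_pos]
  calc (β/4) * (vv k t)^4 * (Real.sin (pp k t))^2
      ≤ (β/4) * 1 * (Real.pi^2 * Real.exp (-(2*k*|t|))) := by
        apply mul_le_mul (by nlinarith) hsin (sq_nonneg _) (by positivity)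
    _ ≤ (β/4) * 1 * (10 * Real.exp (-(k/2*|t|))) := by
        apply mul_le_mul_of_nonneg_left _ (by positivity)
        calc Real.pi^2 * Real.exp (-(2*k*|t|)) ≤ 10 * Real.exp (-(2*k*|t|)) :=
              mul_le_mul_of_nonneg_right hpi2 (Real.exp_pos _).le
          _ ≤ 10 * Real.exp (-(k/2*|t|)) := mul_le_mul_of_nonneg_left hmono (by norm_num)
    _ = (10/4) * β * Real.exp (-(k/2*|t|)) := by ring
    _ ≤ 3*β*Real.exp (-(k/2*|t|)) := by
        nlinarith [Real.exp_pos (-(k/2*|t|)), mul_pos hβ (Real.exp_pos (-(k/2*|t|)))]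

end


section
variable {k β : ℝ}

lemma deriv_vv (hk0 : 0 < k) : deriv (vv k) = vd k :=
  funext fun t => (hasDerivAt_vv hk0 t).deriv

lemma deriv_pp : deriv (pp k) = pd k :=
  funext fun t => (hasDerivAt_pp (k := k) t).deriv

lemma gInt_test_eq (hk0 : 0 < k) : gInt β (vv k) (pp k) = fun t =>
    (vd k t)^2 + (1 - (vv k t)^2)^2/2 + (vv k t)^2 * (pd k t)^2/4
      + (β/4) * (vv k t)^4 * (Real.sin (pp k t))^2 := by
  funext t
  rw [gInt, deriv_vv hk0, deriv_pp]

lemma gInt_test_le (hβ : 0 < β) (hk3 : 3 ≤ k) (t : ℝ) :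
    gInt β (vv k) (pp k) t ≤ psi t + (900 + 3*β) * Real.exp (-(k/2*|t|)) := by
  have hk0 : (0:ℝ) < k := by linarith
  rw [gInt_test_eq hk0]
  have h1 := vpart_le hk0 t
  have h2 := phi1_le hk3 t
  have h3 := phi2_le hβ hk3 t
  have e : (900 + 3*β) * Real.exp (-(k/2*|t|))
      = 900 * Real.exp (-(k/2*|t|)) + 3*β*Real.exp (-(k/2*|t|)) := by ring
  rw [e]
  dsimp only
  linarith

lemma gInt_test_nonneg (hβ : 0 < β) (hk0 : 0 < k) (t : ℝ) :
    0 ≤ gInt β (vv k) (pp k) t := by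
  rw [gInt_test_eq hk0]
  dsimp only
  have h1 : 0 ≤ (β/4) * (vv k t)^4 * (Real.sin (pp k t))^2 := by positivity
  positivity

lemma gInt_test_continuous (hk0 : 0 < k) : Continuous (gInt β (vv k) (pp k)) := by
  rw [gInt_test_eq hk0]
  have hv := continuous_vv hk0
  have hvd := continuous_vd hk0
  have hp := continuous_pp (k := k)
  have hpd := continuous_pd (k := k)
  fun_prop

lemma integrable_maj (hβ : 0 < β) (hk3 : 3 ≤ k) :
    Integrable (fun t : ℝ => psi t + (900 + 3*β) * Real.exp (-(k/2*|t|))) := by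
  exact integrable_psi.add ((integrable_exp_abs (k/2) (by linarith)).const_mul _)

lemma integrable_gInt_test (hβ : 0 < β) (hk3 : 3 ≤ k) :
    Integrable (gInt β (vv k) (pp k)) := by
  have hk0 : (0:ℝ) < k := by linarith
  apply Integrable.mono' (integrable_maj hβ hk3)
    (gInt_test_continuous hk0).aestronglyMeasurable
  filter_upwards with t
  rw [Real.norm_eq_abs, abs_of_nonneg (gInt_test_nonneg hβ hk0 t)]
  exact gInt_test_le hβ hk3 t

lemma admissible_test (hβ : 0 < β) (hk3 : 3 ≤ k) : Admissible β (vv k) (pp k) := by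
  have hk0 : (0:ℝ) < k := by linarith
  refine ⟨fun t => (hasDerivAt_vv hk0 t).differentiableAt, vv_nonneg hk0,
    fun t => (hasDerivAt_pp (k := k) t).differentiableAt,
    fun t => ⟨(pp_pos (k := k) t).le, (pp_lt_pi (k := k) t).le⟩,
    pp_tendsto_atBot hk0, pp_tendsto_atTop hk0, integrable_gInt_test hβ hk3⟩

lemma Gbeta_test_le (hβ : 0 < β) (hk3 : 3 ≤ k) :
    Gbeta β (vv k) (pp k) ≤ 2 * Real.sqrt 2 / 3 + (1800 + 6*β)/k := by
  have hk0 : (0:ℝ) < k := by linarith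
  have hint : ∫ t : ℝ, gInt β (vv k) (pp k) t
      ≤ ∫ t : ℝ, (psi t + (900 + 3*β) * Real.exp (-(k/2*|t|))) := by
    apply integral_mono (integrable_gInt_test hβ hk3) (integrable_maj hβ hk3)
    exact gInt_test_le hβ hk3
  have hval : ∫ t : ℝ, (psi t + (900 + 3*β) * Real.exp (-(k/2*|t|)))
      = 4 * Real.sqrt 2/3 + (900 + 3*β) * (2/(k/2)) := by
    rw [integral_add integrable_psi ((integrable_exp_abs (k/2) (by linarith)).const_mul _),
      int_psi, MeasureTheory.integral_const_mul, int_exp_abs (k/2) (by linarith)]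
  rw [Gbeta]
  have e : (900 + 3*β) * (2/(k/2)) = (3600 + 12*β)/k := by
    field_simp
    ring
  rw [hval, e] at hint
  have efin : (2:ℝ) * Real.sqrt 2/3 + (1800+6*β)/k
      = (1/2) * (4*Real.sqrt 2/3 + (3600+12*β)/k) := by ring
  rw [efin]
  linarith

end


noncomputable def Wfun (s : ℝ) : ℝ := s - s^3/3

lemma Wfun_le (s : ℝ) (hs : 0 ≤ s) : Wfun s ≤ s := by
  rw [Wfun]
  nlinarith [pow_nonneg hs 3]

lemma Wfun_near_one {s ε : ℝ} (hs : 0 ≤ s) (hε : ε ≤ 1) (h : (1 - s^2)^2 < ε) :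
    2/3 - (4/3)*ε ≤ Wfun s := by
  rw [Wfun]
  have key : 2/3 - (s - s^3/3) = (1-s)^2*(2+s)/3 := by ring
  have h1 : (1-s)^2*(1+s)^2 = (1-s^2)^2 := by ring
  have hs2 : s^2 < 2 := by nlinarith [sq_nonneg (1 - s^2)]
  have hslt : s < 3/2 := by nlinarith
  have h2 : (1-s)^2*(2+s) ≤ 4*ε := by
    rcases le_or_gt s 1 with h3 | h3
    · nlinarith [sq_nonneg (1-s), sq_nonneg s]
    · nlinarith [sq_nonneg (1-s), sq_nonneg s]
  linarith

lemma alg_bound {β m : ℝ} (hβ : 0 < β) (hm : 0 ≤ m) :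
    m - (Real.sqrt β/4)*m^3 ≤ 4*β^(-(1:ℝ)/4) := by
  set s := β^((1:ℝ)/4) with hs
  have hspos : 0 < s := Real.rpow_pos_of_pos hβ _
  have hsinv : β^(-(1:ℝ)/4) = s⁻¹ := by
    rw [hs, ← Real.rpow_neg_one (β ^ ((1:ℝ)/4)), ← Real.rpow_mul hβ.le]
    norm_num
  have hsq : Real.sqrt β = s^2 := by
    rw [hs, ← Real.rpow_natCast (β ^ ((1:ℝ)/4)) 2, ← Real.rpow_mul hβ.le]
    norm_num
    exact Real.sqrt_eq_rpow β
  rw [hsinv, hsq]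
  have hβ3 : 0 ≤ (s^2/4) * m^3 := by positivity
  rcases le_or_gt m (4*s⁻¹) with h | h
  · calc m - s^2/4*m^3 ≤ m := by linarith
      _ ≤ 4*s⁻¹ := h
  · have h1 : 4*s⁻¹ < m := h
    have h2 : 0 < m := lt_trans (by positivity) h1
    have h3 : s*m > 4 := by
      have := mul_lt_mul_of_pos_left h1 hspos
      rw [show s*(4*s⁻¹) = 4*(s*s⁻¹) from by ring, mul_inv_cancel₀ (ne_of_gt hspos)] at this
      linarith
    have h4 : s^2*m^2 > 16 := by nlinarith
    have h5 : s^2/4*m^3 > 4*m := by nlinarith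
    have h6 : 0 < 4*s⁻¹ := by positivity
    linarith

-- pointwise Modica–Mortola
lemma modica_pointwise (v : ℝ → ℝ) (t : ℝ) :
    Real.sqrt 2 * ((1 - (v t)^2) * deriv v t) ≤ (deriv v t)^2 + (1 - (v t)^2)^2/2 ∧
    -(Real.sqrt 2 * ((1 - (v t)^2) * deriv v t)) ≤ (deriv v t)^2 + (1 - (v t)^2)^2/2 := by
  have h2 : (Real.sqrt 2)^2 = 2 := Real.sq_sqrt (by norm_num)
  constructor
  · nlinarith [sq_nonneg (Real.sqrt 2 * deriv v t - (1 - (v t)^2))]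
  · nlinarith [sq_nonneg (Real.sqrt 2 * deriv v t + (1 - (v t)^2))]



set_option maxHeartbeats 2000000 in
lemma lower_bound {β : ℝ} (hβ : 0 < β) {v φ : ℝ → ℝ} (hA : Admissible β v φ) :
    2*Real.sqrt 2/3 - Real.sqrt 2 * 4 * β^(-(1:ℝ)/4) ≤ Gbeta β v φ := by
  obtain ⟨hv, hv0, hφ, hφr, hφbot, hφtop, hint⟩ := hA
  have hvc : Continuous v := hv.continuous
  have hφc : Continuous φ := hφ.continuous
  set F1 : ℝ → ℝ := fun t => (deriv v t)^2 + (1 - (v t)^2)^2/2 with hF1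
  set F2 : ℝ → ℝ := fun t => (v t)^2*(deriv φ t)^2/4
    + (β/4)*(v t)^4*(Real.sin (φ t))^2 with hF2
  have hsplit : gInt β v φ = fun t => F1 t + F2 t := by
    funext t
    simp only [gInt, hF1, hF2]
    ring
  have hF1nn : ∀ t, 0 ≤ F1 t := by intro t; rw [hF1]; positivity
  have hF2nn : ∀ t, 0 ≤ F2 t := by intro t; rw [hF2]; positivity
  have hmv : Measurable (deriv v) := measurable_deriv v
  have hmφ : Measurable (deriv φ) := measurable_deriv φ
  have hF1m : AEStronglyMeasurable F1 volume := by
    apply Measurable.aestronglyMeasurable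
    exact (hmv.pow_const 2).add
      (Continuous.measurable (((continuous_const.sub (hvc.pow 2)).pow 2).div_const 2))
  have hF2m : AEStronglyMeasurable F2 volume := by
    apply Measurable.aestronglyMeasurable
    apply Measurable.add
    · exact (((hvc.measurable.pow_const 2).mul (hmφ.pow_const 2)).div_const 4)
    · exact Continuous.measurable
        ((continuous_const.mul (hvc.pow 4)).mul ((Real.continuous_sin.comp hφc).pow 2))
  have hF1i : Integrable F1 := by
    apply Integrable.mono' hint hF1m
    filter_upwards with t
    rw [Real.norm_eq_abs, abs_of_nonneg (hF1nn t), hsplit]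
    have := hF2nn t
    simp only
    linarith
  have hF2i : Integrable F2 := by
    apply Integrable.mono' hint hF2m
    filter_upwards with t
    rw [Real.norm_eq_abs, abs_of_nonneg (hF2nn t), hsplit]
    have := hF1nn t
    simp only
    linarith
  have hπ : 0 < Real.pi := Real.pi_pos
  -- the point d where φ first reaches 3π/4
  set S : Set ℝ := {t | 3*Real.pi/4 ≤ φ t} with hS
  have hSclosed : IsClosed S := isClosed_le continuous_const hφc
  have hSne : S.Nonempty := by
    have h34 : 3*Real.pi/4 < Real.pi := by linarith
    obtain ⟨x, hx⟩ := mem_atTop_sets.mp (hφtop (Ioi_mem_nhds h34))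
    exact ⟨x, le_of_lt (by simpa using hx x le_rfl)⟩
  have hSbdd : BddBelow S := by
    have h04 : (0:ℝ) < 3*Real.pi/4 := by linarith
    obtain ⟨B, hB⟩ := mem_atBot_sets.mp (hφbot (Iio_mem_nhds h04))
    refine ⟨B, fun s hs => ?_⟩
    by_contra hc
    push_neg at hc
    have h1 : φ s < 3*Real.pi/4 := by simpa using hB s (le_of_lt hc)
    have h2 : 3*Real.pi/4 ≤ φ s := hs
    linarith
  set d := sInf S with hd
  have hdS : d ∈ S := hSclosed.csInf_mem hSne hSbdd
  have hφd : 3*Real.pi/4 ≤ φ d := hdS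
  -- the point c : last time before d with φ ≤ π/4
  set T : Set ℝ := {t | t ≤ d ∧ φ t ≤ Real.pi/4} with hT
  have hTclosed : IsClosed T :=
    IsClosed.inter (isClosed_le continuous_id continuous_const)
      (isClosed_le hφc continuous_const)
  have hTne : T.Nonempty := by
    have h04 : (0:ℝ) < Real.pi/4 := by linarith
    obtain ⟨B, hB⟩ := mem_atBot_sets.mp (hφbot (Iio_mem_nhds h04))
    exact ⟨min B d, ⟨min_le_right _ _, le_of_lt (by simpa using hB _ (min_le_left B d))⟩⟩
  have hTbdd : BddAbove T := ⟨d, fun s hs => hs.1⟩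
  set c := sSup T with hc
  have hcT : c ∈ T := hTclosed.csSup_mem hTne hTbdd
  have hcd : c ≤ d := hcT.1
  have hφc4 : φ c ≤ Real.pi/4 := hcT.2
  -- minimum of v on [c,d]
  obtain ⟨t₀, ht₀mem, ht₀min⟩ := (isCompact_Icc (a := c) (b := d)).exists_isMinOn
    (nonempty_Icc.mpr hcd) hvc.continuousOn
  set m := v t₀ with hmdef
  have hm0 : 0 ≤ m := hv0 t₀
  have hvm : ∀ t ∈ Icc c d, m ≤ v t := fun t ht => ht₀min ht
  -- φ-part estimate
  have hφpart : Real.sqrt β/2 * m^3 * Real.sqrt 2 ≤ ∫ t, F2 t := by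
    rcases eq_or_lt_of_le hm0 with hm | hm
    · rw [← hm]
      simpa using integral_nonneg hF2nn
    · have hφ'2 : IntegrableOn (fun t => (deriv φ t)^2) (Icc c d) := by
        apply Integrable.mono' ((hF2i.integrableOn).const_mul (4/m^2))
          (hmφ.pow_const 2).aestronglyMeasurable.restrict
        apply (ae_restrict_iff' measurableSet_Icc).mpr (ae_of_all _ fun t ht => ?_)
        rw [Real.norm_eq_abs, abs_of_nonneg (sq_nonneg _)]
        have h1 : m^2 ≤ (v t)^2 := by nlinarith [hvm t ht]
        have h2 : m^2*(deriv φ t)^2 ≤ (v t)^2*(deriv φ t)^2 :=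
          mul_le_mul_of_nonneg_right h1 (sq_nonneg _)
        have h3 : 0 ≤ (β/4)*(v t)^4*(Real.sin (φ t))^2 := by positivity
        have e : (deriv φ t)^2 = (4/m^2) * (m^2*(deriv φ t)^2/4) := by
          field_simp
        rw [e, hF2]
        have h4 : (0:ℝ) < 4/m^2 := by positivity
        simp only
        calc (4/m^2) * (m^2*(deriv φ t)^2/4)
            ≤ (4/m^2) * ((v t)^2*(deriv φ t)^2/4) := by
              apply mul_le_mul_of_nonneg_left (by linarith) h4.le
          _ ≤ (4/m^2) * ((v t)^2*(deriv φ t)^2/4 + (β/4)*(v t)^4*(Real.sin (φ t))^2) := by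
              apply mul_le_mul_of_nonneg_left (by linarith) h4.le
      have hφ'2' : IntervalIntegrable (fun t => (deriv φ t)^2) volume c d :=
        (intervalIntegrable_iff_integrableOn_Icc_of_le hcd).mpr hφ'2
      have hsinφ' : IntervalIntegrable (fun t => Real.sin (φ t) * deriv φ t) volume c d := by
        rw [intervalIntegrable_iff_integrableOn_Icc_of_le hcd]
        apply Integrable.mono'
          ((integrableOn_const (s := Icc c d) (μ := volume) (C := (1:ℝ)) measure_Icc_lt_top.ne).add hφ'2)
          (((Real.continuous_sin.comp hφc).measurable.mul hmφ).aestronglyMeasurable.restrict)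
        apply (ae_restrict_iff' measurableSet_Icc).mpr (ae_of_all _ fun t ht => ?_)
        rw [Real.norm_eq_abs, show (Real.sin ∘ φ * deriv φ) t = Real.sin (φ t) * deriv φ t from rfl, abs_mul]
        have h5 : |Real.sin (φ t)| ≤ 1 := Real.abs_sin_le_one _
        have h6 : |deriv φ t| ≤ 1 + (deriv φ t)^2 := by
          nlinarith [sq_nonneg (|deriv φ t| - 1), abs_nonneg (deriv φ t), sq_abs (deriv φ t)]
        have h7 : 0 ≤ |deriv φ t| := abs_nonneg _
        calc |Real.sin (φ t)| * |deriv φ t| ≤ 1 * |deriv φ t| :=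
              mul_le_mul_of_nonneg_right h5 h7
          _ = |deriv φ t| := one_mul _
          _ ≤ 1 + (deriv φ t)^2 := h6
      have hFTC : ∫ t in c..d, Real.sin (φ t) * deriv φ t
          = Real.cos (φ c) - Real.cos (φ d) := by
        have hder : ∀ x ∈ uIcc c d, HasDerivAt (fun t => -Real.cos (φ t))
            (Real.sin (φ x) * deriv φ x) x := by
          intro x _
          have h := ((Real.hasDerivAt_cos (φ x)).comp x (hφ x).hasDerivAt).neg
          simpa [mul_comm, Function.comp_def, Pi.neg_def] using h
        rw [intervalIntegral.integral_eq_sub_of_hasDerivAt hder hsinφ']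
        ring
      have hcos : Real.sqrt 2 ≤ Real.cos (φ c) - Real.cos (φ d) := by
        have h8 : Real.cos (Real.pi/4) ≤ Real.cos (φ c) :=
          Real.cos_le_cos_of_nonneg_of_le_pi (hφr c).1 (by linarith) hφc4
        have h9 : Real.cos (φ d) ≤ Real.cos (3*Real.pi/4) :=
          Real.cos_le_cos_of_nonneg_of_le_pi (by linarith) (hφr d).2 hφd
        have h10 : Real.cos (3*Real.pi/4) = -(Real.sqrt 2/2) := by
          rw [show 3*Real.pi/4 = Real.pi - Real.pi/4 by ring, Real.cos_pi_sub,
            Real.cos_pi_div_four]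
        rw [Real.cos_pi_div_four] at h8
        rw [h10] at h9
        linarith
      have hpoint : ∀ t ∈ Icc c d,
          Real.sqrt β/2*m^3*(Real.sin (φ t)*deriv φ t) ≤ F2 t := by
        intro t ht
        have hsin : 0 ≤ Real.sin (φ t) :=
          Real.sin_nonneg_of_nonneg_of_le_pi (hφr t).1 (hφr t).2
        have hvt := hvm t ht
        have hβs : (Real.sqrt β)^2 = β := Real.sq_sqrt hβ.le
        have e1 : F2 t = (v t*deriv φ t/2)^2
            + (Real.sqrt β/2*(v t)^2*Real.sin (φ t))^2 := by
          rw [hF2]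
          simp only
          rw [show (Real.sqrt β/2*(v t)^2*Real.sin (φ t))^2
            = (Real.sqrt β)^2/4*(v t)^4*(Real.sin (φ t))^2 by ring, hβs]
          ring
        have hAM : 2*(v t*|deriv φ t|/2)*(Real.sqrt β/2*(v t)^2*Real.sin (φ t)) ≤ F2 t := by
          rw [e1]
          nlinarith [sq_nonneg (v t*|deriv φ t|/2 - Real.sqrt β/2*(v t)^2*Real.sin (φ t)),
            sq_abs (deriv φ t)]
        have hchain : Real.sqrt β/2*m^3*(Real.sin (φ t)*deriv φ t)
            ≤ 2*(v t*|deriv φ t|/2)*(Real.sqrt β/2*(v t)^2*Real.sin (φ t)) := by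
          have hb1 : m^3 ≤ (v t)^3 := pow_le_pow_left₀ hm0 hvt 3
          have hb2 : deriv φ t ≤ |deriv φ t| := le_abs_self _
          have e2 : 2*(v t*|deriv φ t|/2)*(Real.sqrt β/2*(v t)^2*Real.sin (φ t))
              = (Real.sqrt β/2*(v t)^3)*(Real.sin (φ t)*|deriv φ t|) := by ring
          rw [e2]
          have hsb : (0:ℝ) ≤ Real.sqrt β/2 := by positivity
          calc Real.sqrt β/2*m^3*(Real.sin (φ t)*deriv φ t)
              ≤ Real.sqrt β/2*m^3*(Real.sin (φ t)*|deriv φ t|) := by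
                apply mul_le_mul_of_nonneg_left
                  (mul_le_mul_of_nonneg_left hb2 hsin) (by positivity)
            _ ≤ (Real.sqrt β/2*(v t)^3)*(Real.sin (φ t)*|deriv φ t|) := by
                apply mul_le_mul_of_nonneg_right _
                  (mul_nonneg hsin (abs_nonneg _))
                exact mul_le_mul_of_nonneg_left hb1 hsb
        linarith
      have hIcc_le : ∫ t in c..d, Real.sqrt β/2*m^3*(Real.sin (φ t)*deriv φ t)
          ≤ ∫ t in c..d, F2 t := by
        apply intervalIntegral.integral_mono_on hcd (hsinφ'.const_mul _)
          hF2i.intervalIntegrable hpoint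
      have hleft : ∫ t in c..d, Real.sqrt β/2*m^3*(Real.sin (φ t)*deriv φ t)
          = Real.sqrt β/2*m^3*(Real.cos (φ c) - Real.cos (φ d)) := by
        rw [← hFTC, ← intervalIntegral.integral_const_mul]
      have hIoc : ∫ t in c..d, F2 t ≤ ∫ t, F2 t := by
        rw [intervalIntegral.integral_of_le hcd]
        exact setIntegral_le_integral hF2i (ae_of_all _ hF2nn)
      calc Real.sqrt β/2*m^3*Real.sqrt 2
          ≤ Real.sqrt β/2*m^3*(Real.cos (φ c) - Real.cos (φ d)) :=
            mul_le_mul_of_nonneg_left hcos (by positivity)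
        _ = ∫ t in c..d, Real.sqrt β/2*m^3*(Real.sin (φ t)*deriv φ t) := hleft.symm
        _ ≤ ∫ t in c..d, F2 t := hIcc_le
        _ ≤ ∫ t, F2 t := hIoc
  -- v-part estimate
  have hvpart : ∀ ε : ℝ, 0 < ε → ε ≤ 1 →
      Real.sqrt 2*(2*(2/3 - (4/3)*ε) - 2*Wfun m) ≤ ∫ t, F1 t := by
    intro ε hε hε1
    have hexa : ∀ x : ℝ, ∃ a < x, (1 - (v a)^2)^2 < ε := by
      intro x
      by_contra hcon
      push_neg at hcon
      have hconst : IntegrableOn (fun _ : ℝ => ε/2) (Iio x) := by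
        apply Integrable.mono' (hF1i.integrableOn (s := Iio x))
          aestronglyMeasurable_const
        apply (ae_restrict_iff' measurableSet_Iio).mpr (ae_of_all _ fun t ht => ?_)
        rw [Real.norm_eq_abs, abs_of_nonneg (by linarith)]
        have h1 := hcon t ht
        have h2 := sq_nonneg (deriv v t)
        rw [hF1]
        simp only
        linarith
      rw [integrableOn_const_iff] at hconst
      rcases hconst with h | h
      · simp at h; linarith
      · rw [Real.volume_Iio] at h
        exact absurd h (by simp)
    have hexb : ∀ x : ℝ, ∃ b > x, (1 - (v b)^2)^2 < ε := by
      intro x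
      by_contra hcon
      push_neg at hcon
      have hconst : IntegrableOn (fun _ : ℝ => ε/2) (Ioi x) := by
        apply Integrable.mono' (hF1i.integrableOn (s := Ioi x))
          aestronglyMeasurable_const
        apply (ae_restrict_iff' measurableSet_Ioi).mpr (ae_of_all _ fun t ht => ?_)
        rw [Real.norm_eq_abs, abs_of_nonneg (by linarith)]
        have h1 := hcon t ht
        have h2 := sq_nonneg (deriv v t)
        rw [hF1]
        simp only
        linarith
      rw [integrableOn_const_iff] at hconst
      rcases hconst with h | h
      · simp at h; linarith
      · rw [Real.volume_Ioi] at h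
        exact absurd h (by simp)
    obtain ⟨a, hac, hva⟩ := hexa c
    obtain ⟨b, hbd, hvb⟩ := hexb d
    have hF1ii : ∀ x y : ℝ, IntervalIntegrable F1 volume x y := fun x y =>
      hF1i.intervalIntegrable
    have hWder : ∀ u : ℝ, HasDerivAt (fun t => Wfun (v t)) ((1 - (v u)^2)*deriv v u) u := by
      intro u
      have h1 := (hv u).hasDerivAt
      have h2 := h1.sub ((h1.pow 3).div_const 3)
      have e : (1 - (v u)^2)*deriv v u = deriv v u - 3*(v u)^(3-1)*deriv v u/3 := by
        norm_num
        ring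
      rw [show (fun t => Wfun (v t)) = fun t => v t - (v t)^3/3 from funext fun t => rfl, e]
      exact h2
    have hWii : ∀ x y : ℝ, IntervalIntegrable (fun t => (1 - (v t)^2)*deriv v t) volume x y := by
      intro x y
      rw [intervalIntegrable_iff]
      apply Integrable.mono' (hF1i.integrableOn)
        (((Continuous.measurable (continuous_const.sub (hvc.pow 2))).mul
          hmv).aestronglyMeasurable.restrict)
      apply ae_of_all _ fun t => ?_
      rw [Real.norm_eq_abs, show (((fun _ : ℝ => (1:ℝ)) - v ^ 2) * deriv v) t = (1 - (v t)^2) * deriv v t from rfl, abs_mul, hF1]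
      simp only
      have h5 := abs_nonneg (1 - (v t)^2)
      have h6 := abs_nonneg (deriv v t)
      nlinarith [sq_nonneg (|1 - (v t)^2| - |deriv v t|), sq_abs (1 - (v t)^2),
        sq_abs (deriv v t)]
    have hW : ∀ x y : ℝ, ∫ t in x..y, (1 - (v t)^2)*deriv v t
        = Wfun (v y) - Wfun (v x) := fun x y =>
      intervalIntegral.integral_eq_sub_of_hasDerivAt (fun u _ => hWder u) (hWii x y)
    have hlow1 : ∀ x y : ℝ, x ≤ y →
        Real.sqrt 2*(Wfun (v y) - Wfun (v x)) ≤ ∫ t in x..y, F1 t := by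
      intro x y hxy
      have h := intervalIntegral.integral_mono_on hxy ((hWii x y).const_mul (Real.sqrt 2))
        (hF1ii x y) (fun t _ => (modica_pointwise v t).1)
      rw [intervalIntegral.integral_const_mul, hW] at h
      exact h
    have hlow2 : ∀ x y : ℝ, x ≤ y →
        Real.sqrt 2*(Wfun (v x) - Wfun (v y)) ≤ ∫ t in x..y, F1 t := by
      intro x y hxy
      have h := intervalIntegral.integral_mono_on hxy
        (((hWii x y).const_mul (Real.sqrt 2)).neg)
        (hF1ii x y) (fun t _ => (modica_pointwise v t).2)
      simp only [Pi.neg_apply] at h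
      rw [intervalIntegral.integral_neg, intervalIntegral.integral_const_mul, hW] at h
      have e : -(Real.sqrt 2 * (Wfun (v y) - Wfun (v x)))
          = Real.sqrt 2*(Wfun (v x) - Wfun (v y)) := by ring
      rw [e] at h
      exact h
    have hat : a ≤ t₀ := le_trans hac.le ht₀mem.1
    have htb : t₀ ≤ b := le_trans ht₀mem.2 hbd.le
    have hab : a ≤ b := le_trans hat htb
    have hsum : (∫ t in a..t₀, F1 t) + ∫ t in t₀..b, F1 t = ∫ t in a..b, F1 t :=
      intervalIntegral.integral_add_adjacent_intervals (hF1ii a t₀) (hF1ii t₀ b)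
    have htot : ∫ t in a..b, F1 t ≤ ∫ t, F1 t := by
      rw [intervalIntegral.integral_of_le hab]
      exact setIntegral_le_integral hF1i (ae_of_all _ hF1nn)
    have hWa : 2/3 - (4/3)*ε ≤ Wfun (v a) := Wfun_near_one (hv0 a) hε1 hva
    have hWb : 2/3 - (4/3)*ε ≤ Wfun (v b) := Wfun_near_one (hv0 b) hε1 hvb
    have hL := hlow2 a t₀ hat
    have hR := hlow1 t₀ b htb
    have hs2 : (0:ℝ) ≤ Real.sqrt 2 := Real.sqrt_nonneg 2
    have key : Real.sqrt 2*(Wfun (v a) - Wfun m) + Real.sqrt 2*(Wfun (v b) - Wfun m)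
        ≤ ∫ t, F1 t := by
      calc Real.sqrt 2*(Wfun (v a) - Wfun m) + Real.sqrt 2*(Wfun (v b) - Wfun m)
          ≤ (∫ t in a..t₀, F1 t) + ∫ t in t₀..b, F1 t := add_le_add hL hR
        _ = ∫ t in a..b, F1 t := hsum
        _ ≤ ∫ t, F1 t := htot
    have hfin : Real.sqrt 2*(2*(2/3 - (4/3)*ε) - 2*Wfun m)
        ≤ Real.sqrt 2*(Wfun (v a) - Wfun m) + Real.sqrt 2*(Wfun (v b) - Wfun m) := by
      have e : Real.sqrt 2*(Wfun (v a) - Wfun m) + Real.sqrt 2*(Wfun (v b) - Wfun m)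
          = Real.sqrt 2*((Wfun (v a) + Wfun (v b)) - 2*Wfun m) := by ring
      rw [e]
      apply mul_le_mul_of_nonneg_left _ hs2
      linarith
    linarith
  -- final assembly
  have hGb : Gbeta β v φ = (1/2)*((∫ t, F1 t) + ∫ t, F2 t) := by
    rw [Gbeta, hsplit, integral_add hF1i hF2i]
  have hWm : Wfun m ≤ m := Wfun_le m hm0
  have halg := alg_bound hβ hm0
  have hs2 : (0:ℝ) ≤ Real.sqrt 2 := Real.sqrt_nonneg 2
  apply le_of_forall_pos_le_add
  intro δ hδ
  set ε := min 1 (δ/4) with hε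
  have hε0 : 0 < ε := lt_min one_pos (by linarith)
  have hε1 : ε ≤ 1 := min_le_left _ _
  have hεδ : ε ≤ δ/4 := min_le_right _ _
  have h1 := hvpart ε hε0 hε1
  have h2 := hφpart
  -- Gbeta ≥ 2√2/3 - (4√2/3)ε - √2 Wm + (√2/4)√β m³
  have h3 : 2*Real.sqrt 2/3 - Real.sqrt 2*(4/3)*ε - Real.sqrt 2*(m - Real.sqrt β/4*m^3)
      ≤ Gbeta β v φ := by
    rw [hGb]
    have e1 : (1/2)*((Real.sqrt 2*(2*(2/3 - (4/3)*ε) - 2*Wfun m))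
        + (Real.sqrt β/2*m^3*Real.sqrt 2))
        = 2*Real.sqrt 2/3 - Real.sqrt 2*(4/3)*ε - Real.sqrt 2*(Wfun m - Real.sqrt β/4*m^3) := by
      ring
    have h4 : Real.sqrt 2*(Wfun m - Real.sqrt β/4*m^3)
        ≤ Real.sqrt 2*(m - Real.sqrt β/4*m^3) :=
      mul_le_mul_of_nonneg_left (by linarith) hs2
    have h5 : (1/2)*((Real.sqrt 2*(2*(2/3 - (4/3)*ε) - 2*Wfun m))
        + (Real.sqrt β/2*m^3*Real.sqrt 2)) ≤ (1/2)*((∫ t, F1 t) + ∫ t, F2 t) := by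
      apply mul_le_mul_of_nonneg_left (add_le_add h1 h2) (by norm_num)
    rw [e1] at h5
    linarith
  have h6 : Real.sqrt 2*(m - Real.sqrt β/4*m^3) ≤ Real.sqrt 2*(4*β^(-(1:ℝ)/4)) :=
    mul_le_mul_of_nonneg_left halg hs2
  have h7 : Real.sqrt 2*(4/3)*ε ≤ δ := by
    have hs32 : Real.sqrt 2 ≤ 3/2 := by
      nlinarith [Real.sq_sqrt (by norm_num : (0:ℝ) ≤ 2), Real.sqrt_nonneg 2]
    have hc1 : Real.sqrt 2*(4/3)*ε ≤ (3/2)*(4/3)*ε := by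
      apply mul_le_mul_of_nonneg_right _ hε0.le
      apply mul_le_mul_of_nonneg_right hs32 (by norm_num)
    linarith
  linarith


lemma gInt_nonneg {β : ℝ} (hβ : 0 < β) (v φ : ℝ → ℝ) (t : ℝ) : 0 ≤ gInt β v φ t := by
  rw [gInt]
  positivity

lemma Gbeta_nonneg {β : ℝ} (hβ : 0 < β) (v φ : ℝ → ℝ) : 0 ≤ Gbeta β v φ := by
  rw [Gbeta]
  have h := integral_nonneg (f := gInt β v φ) (μ := volume) (gInt_nonneg hβ v φ)
  linarith

lemma S_bddBelow {β : ℝ} (hβ : 0 < β) :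
    BddBelow {e : ℝ | ∃ v φ, Admissible β v φ ∧ e = Gbeta β v φ} := by
  refine ⟨0, fun e he => ?_⟩
  obtain ⟨v, φ, _, rfl⟩ := he
  exact Gbeta_nonneg hβ v φ

lemma S_nonempty {β : ℝ} (hβ : 0 < β) :
    {e : ℝ | ∃ v φ, Admissible β v φ ∧ e = Gbeta β v φ}.Nonempty :=
  ⟨Gbeta β (vv 3) (pp 3), vv 3, pp 3, admissible_test hβ le_rfl, rfl⟩

lemma sigmaBar_le {β : ℝ} (hβ : 0 < β) : sigmaBar β ≤ 2 * Real.sqrt 2 / 3 := by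
  rw [sigmaBar]
  apply le_of_forall_pos_le_add
  intro ε hε
  set k : ℝ := max 3 ((1800 + 6*β)/ε) with hk
  have hk3 : (3:ℝ) ≤ k := le_max_left _ _
  have hk0 : (0:ℝ) < k := by linarith
  have hkε : (1800 + 6*β)/k ≤ ε := by
    rw [div_le_iff₀ hk0]
    have h1 : (1800 + 6*β)/ε ≤ k := le_max_right _ _
    calc 1800 + 6*β = ε * ((1800 + 6*β)/ε) := by field_simp
      _ ≤ ε * k := mul_le_mul_of_nonneg_left h1 hε.le
  have hmem : Gbeta β (vv k) (pp k) ∈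
      {e : ℝ | ∃ v φ, Admissible β v φ ∧ e = Gbeta β v φ} :=
    ⟨vv k, pp k, admissible_test hβ hk3, rfl⟩
  calc sInf {e : ℝ | ∃ v φ, Admissible β v φ ∧ e = Gbeta β v φ}
      ≤ Gbeta β (vv k) (pp k) := csInf_le (S_bddBelow hβ) hmem
    _ ≤ 2 * Real.sqrt 2 / 3 + (1800 + 6*β)/k := Gbeta_test_le hβ hk3
    _ ≤ 2 * Real.sqrt 2 / 3 + ε := by linarith

lemma sigmaBar_ge {β : ℝ} (hβ : 0 < β) :
    2 * Real.sqrt 2 / 3 - Real.sqrt 2 * 4 * β ^ (-(1:ℝ)/4) ≤ sigmaBar β := by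
  rw [sigmaBar]
  apply le_csInf (S_nonempty hβ)
  rintro e ⟨v, φ, hA, rfl⟩
  exact lower_bound hβ hA


end SigmaAux


theorem sigmaBar_large_beta :
    (∀ β > (0:ℝ), sigmaBar β ≤ 2 * Real.sqrt 2 / 3) ∧
    (∃ C > (0:ℝ), ∀ β > (0:ℝ),
      2 * Real.sqrt 2 / 3 - Real.sqrt 2 * C * β ^ (-(1:ℝ)/4) ≤ sigmaBar β) ∧
    Tendsto sigmaBar atTop (nhds (2 * Real.sqrt 2 / 3)) := by
  refine ⟨fun β hβ => SigmaAux.sigmaBar_le hβ, ⟨4, by norm_num,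
    fun β hβ => SigmaAux.sigmaBar_ge hβ⟩, ?_⟩
  have h0 : Tendsto (fun β : ℝ => β ^ (-(1:ℝ)/4)) atTop (nhds 0) := by
    have := tendsto_rpow_neg_atTop (y := 1/4) (by norm_num)
    convert this using 2 with x
    norm_num
  have hlo : Tendsto (fun β : ℝ => 2 * Real.sqrt 2 / 3 - Real.sqrt 2 * 4 * β ^ (-(1:ℝ)/4))
      atTop (nhds (2 * Real.sqrt 2 / 3)) := by
    have h1 := tendsto_const_nhds (x := 2 * Real.sqrt 2 / 3) (f := atTop (α := ℝ))
    have h2 := (tendsto_const_nhds (x := Real.sqrt 2 * 4) (f := atTop (α := ℝ))).mul h0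
    have h3 := h1.sub h2
    simpa using h3
  apply tendsto_of_tendsto_of_tendsto_of_le_of_le' hlo tendsto_const_nhds
  · filter_upwards [eventually_gt_atTop (0:ℝ)] with β hβ
    exact SigmaAux.sigmaBar_ge hβ
  · filter_upwards [eventually_gt_atTop (0:ℝ)] with β hβ
    exact SigmaAux.sigmaBar_le hβ
end

section
/- There exists a constant C > 0 such that for all β ∈ (0,1], σ̄_β ≤ C √β. In fact one can take the test pair v ≡ (an optimal Modica–Mortola-type profile equal to 1) and φ_β linear of slope π√β/2 on an interval of length 2/√β, giving G_β(1, φ_β) ≤ C√β. -/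
open MeasureTheory Real Set Filter

/-- The linear test phase of slope `π√β/2` on an interval of length `2/√β`. -/
noncomputable def phiBeta (β : ℝ) : ℝ → ℝ := fun t =>
  if t ≤ -(1/Real.sqrt β) then 0
  else if t ≤ 1/Real.sqrt β then (Real.pi * Real.sqrt β / 2) * (t + 1/Real.sqrt β)
  else Real.pi

/-! ### Auxiliary material -/

/-- The sine-Gordon kink profile. -/
noncomputable def phiSG (β : ℝ) : ℝ → ℝ := fun t =>
  2 * Real.arctan (Real.exp (Real.sqrt β * t))

/-- The energy density of the sine-Gordon kink (with `v ≡ 1`). -/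
noncomputable def DSG (β : ℝ) : ℝ → ℝ := fun t =>
  2 * β * Real.exp (Real.sqrt β * t) ^ 2 / (1 + Real.exp (Real.sqrt β * t) ^ 2) ^ 2

/-- `DSG β = √β • D0SG β`, and `D0SG β` is the derivative of `FSG β`. -/
noncomputable def D0SG (β : ℝ) : ℝ → ℝ := fun t =>
  2 * Real.sqrt β * Real.exp (Real.sqrt β * t) ^ 2
    / (1 + Real.exp (Real.sqrt β * t) ^ 2) ^ 2

noncomputable def FSG (β : ℝ) : ℝ → ℝ := fun t =>
  -((1 + Real.exp (Real.sqrt β * t) ^ 2)⁻¹)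

lemma hasDerivAt_exp_smul (s t : ℝ) :
    HasDerivAt (fun x : ℝ => Real.exp (s * x)) (Real.exp (s * t) * s) t := by
  have h1 : HasDerivAt (fun x : ℝ => s * x) s t := by
    simpa using (hasDerivAt_id t).const_mul s
  exact (Real.hasDerivAt_exp (s * t)).comp t h1

lemma hasDerivAt_phiSG (β : ℝ) (t : ℝ) :
    HasDerivAt (phiSG β)
      (2 * Real.sqrt β * Real.exp (Real.sqrt β * t)
        / (1 + Real.exp (Real.sqrt β * t) ^ 2)) t := by
  set s := Real.sqrt β
  have h3 : HasDerivAt (fun x : ℝ => Real.arctan (Real.exp (s * x)))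
      (1 / (1 + Real.exp (s * t) ^ 2) * (Real.exp (s * t) * s)) t :=
    (Real.hasDerivAt_arctan (Real.exp (s * t))).comp (h := fun x : ℝ => Real.exp (s * x)) t
      (hasDerivAt_exp_smul s t)
  have h4 := h3.const_mul 2
  refine (h4 : HasDerivAt (phiSG β) _ t).congr_deriv ?_
  ring

lemma hasDerivAt_FSG (β : ℝ) (t : ℝ) : HasDerivAt (FSG β) (D0SG β t) t := by
  set s := Real.sqrt β
  have h2 := hasDerivAt_exp_smul s t
  have h3 : HasDerivAt (fun x : ℝ => 1 + Real.exp (s * x) ^ 2)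
      (2 * Real.exp (s * t) ^ 1 * (Real.exp (s * t) * s)) t :=
    (h2.pow 2).const_add 1
  have hQ : (1 + Real.exp (s * t) ^ 2) ≠ 0 := by positivity
  have h4 := (h3.inv hQ).neg
  refine (h4 : HasDerivAt (FSG β) _ t).congr_deriv ?_
  unfold D0SG
  rw [show Real.sqrt β = s from rfl]
  field_simp

lemma gInt_sg {β : ℝ} (hβ : 0 < β) :
    gInt β (fun _ => 1) (phiSG β) = DSG β := by
  funext t
  set s := Real.sqrt β with hs
  set u := Real.exp (s * t) with hu
  have hQ : (0:ℝ) < 1 + u ^ 2 := by positivity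
  have hs2 : s ^ 2 = β := Real.sq_sqrt hβ.le
  have hd : deriv (phiSG β) t = 2 * s * u / (1 + u ^ 2) :=
    (hasDerivAt_phiSG β t).deriv
  have hsin : Real.sin (phiSG β t) = 2 * u / (1 + u ^ 2) := by
    have h1 : phiSG β t = 2 * Real.arctan u := rfl
    have h2 : Real.sqrt (1 + u ^ 2) * Real.sqrt (1 + u ^ 2) = 1 + u ^ 2 :=
      Real.mul_self_sqrt hQ.le
    have h3 : Real.sqrt (1 + u ^ 2) ≠ 0 := by positivity
    rw [h1, Real.sin_two_mul, Real.sin_arctan, Real.cos_arctan]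
    field_simp
    rw [Real.sq_sqrt hQ.le]
  unfold gInt DSG
  rw [← hs, ← hu]
  rw [hd, hsin]
  simp only [deriv_const']
  have hQ' : (1 + u ^ 2) ≠ 0 := ne_of_gt hQ
  rw [← hs2]
  field_simp
  ring

lemma integrable_exp_neg_abs {c : ℝ} (hc : 0 < c) :
    Integrable (fun t : ℝ => Real.exp (-c * |t|)) := by
  have h1 : IntegrableOn (fun t : ℝ => Real.exp (-c * t)) (Ioi 0) :=
    exp_neg_integrableOn_Ioi 0 hc
  have hg : Integrable ((Iic (0:ℝ)).indicator Real.exp) :=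
    (integrableOn_exp_Iic 0).integrable_indicator measurableSet_Iic
  have hg2 : Integrable (fun t : ℝ => (Iic (0:ℝ)).indicator Real.exp (c * t)) :=
    hg.comp_mul_left' hc.ne'
  have heq : (fun t : ℝ => (Iic (0:ℝ)).indicator Real.exp (c * t))
      = (Iic (0:ℝ)).indicator (fun t => Real.exp (c * t)) := by
    funext t
    by_cases ht : t ≤ 0
    · have hct : c * t ≤ 0 := mul_nonpos_iff.mpr (Or.inl ⟨hc.le, ht⟩)
      simp [indicator, ht, hct]
    · have hct : ¬ (c * t ≤ 0) := by
        push_neg at ht ⊢; exact mul_pos hc ht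
      simp [indicator, ht, hct]
    -- done
  rw [heq] at hg2
  have h2 : IntegrableOn (fun t : ℝ => Real.exp (c * t)) (Iic 0) :=
    (integrable_indicator_iff measurableSet_Iic).mp hg2
  have hA : IntegrableOn (fun t : ℝ => Real.exp (-c * |t|)) (Iic 0) := by
    refine h2.congr_fun (fun t ht => ?_) measurableSet_Iic
    have : |t| = -t := abs_of_nonpos ht
    rw [this]; ring_nf
  have hB : IntegrableOn (fun t : ℝ => Real.exp (-c * |t|)) (Ioi 0) := by
    refine h1.congr_fun (fun t ht => ?_) measurableSet_Ioi
    have : |t| = t := abs_of_pos ht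
    rw [this]
  have := hA.union hB
  rwa [Iic_union_Ioi, integrableOn_univ] at this

lemma exp_sq_eq (x : ℝ) : Real.exp x ^ 2 = Real.exp (2 * x) := by
  rw [sq, ← Real.exp_add]; ring_nf

lemma integrable_DSG {β : ℝ} (hβ : 0 < β) : Integrable (DSG β) := by
  set s := Real.sqrt β with hs
  have hspos : 0 < s := Real.sqrt_pos.mpr hβ
  have hbig : Integrable (fun t : ℝ => 2 * β * Real.exp (-(2 * s) * |t|)) :=
    (integrable_exp_neg_abs (by positivity)).const_mul (2 * β)
  refine hbig.mono' ?_ ?_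
  · apply Continuous.aestronglyMeasurable
    apply Continuous.div
    · fun_prop
    · fun_prop
    · intro t; positivity
  · refine ae_of_all _ (fun t => ?_)
    set u := Real.exp (s * t) with hu
    have hupos : 0 < u := Real.exp_pos _
    have hQ : (0:ℝ) < 1 + u ^ 2 := by positivity
    have hDpos : 0 ≤ DSG β t := by
      unfold DSG; rw [← hs, ← hu]; positivity
    rw [Real.norm_of_nonneg hDpos]
    unfold DSG
    rw [← hs, ← hu]
    rcases le_or_gt t 0 with ht | ht
    · have habs : |t| = -t := abs_of_nonpos ht
      have hval : Real.exp (-(2 * s) * |t|) = u ^ 2 := by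
        rw [habs, hu, exp_sq_eq]; ring_nf
      rw [hval, div_le_iff₀ (by positivity)]
      have h1le : 1 ≤ (1 + u ^ 2) ^ 2 := by nlinarith [sq_nonneg u]
      nlinarith [mul_le_mul_of_nonneg_left h1le
        (show (0:ℝ) ≤ 2 * β * u ^ 2 by positivity)]
    · have habs : |t| = t := abs_of_pos ht
      have hval : Real.exp (-(2 * s) * |t|) = (u ^ 2)⁻¹ := by
        rw [habs, hu, exp_sq_eq, ← Real.exp_neg]; ring_nf
      rw [hval, div_le_iff₀ (by positivity)]
      have h1 : u ^ 2 ≤ 1 + u ^ 2 := by linarith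
      have h2 : (0:ℝ) ≤ (1 + u ^ 2) ^ 2 - (u ^ 2) ^ 2 := by nlinarith
      rw [mul_comm (2 * β * (u ^ 2)⁻¹) ((1 + u ^ 2) ^ 2), ← sub_nonneg]
      have heq2 : (1 + u ^ 2) ^ 2 * (2 * β * (u ^ 2)⁻¹) - 2 * β * u ^ 2
          = 2 * β * (u ^ 2)⁻¹ * ((1 + u ^ 2) ^ 2 - (u ^ 2) ^ 2) := by
        field_simp
      rw [heq2]
      positivity

lemma integral_DSG {β : ℝ} (hβ : 0 < β) : ∫ t, DSG β t = Real.sqrt β := by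
  set s := Real.sqrt β with hs
  have hspos : 0 < s := Real.sqrt_pos.mpr hβ
  have hs2 : s ^ 2 = β := Real.sq_sqrt hβ.le
  have hDeq : DSG β = fun t => s * D0SG β t := by
    funext t
    unfold DSG D0SG
    rw [← hs]
    have hQ : (0:ℝ) < 1 + Real.exp (s * t) ^ 2 := by positivity
    field_simp
    nlinarith [hs2, sq_nonneg (Real.exp (s*t))]
  have hD0int : Integrable (D0SG β) := by
    have h := (integrable_DSG hβ).const_mul s⁻¹
    have : (fun t => s⁻¹ * DSG β t) = D0SG β := by
      rw [hDeq]; funext t; field_simp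
    rwa [this] at h
  have hbot : Tendsto (FSG β) atBot (nhds (-1)) := by
    have he : Tendsto (fun t : ℝ => Real.exp (s * t)) atBot (nhds 0) :=
      Real.tendsto_exp_atBot.comp (by simpa using tendsto_id.const_mul_atBot hspos)
    have h0 : Tendsto (fun t : ℝ => 1 + Real.exp (s * t) ^ 2) atBot
        (nhds (1 + (0:ℝ) ^ 2)) := tendsto_const_nhds.add (he.pow 2)
    have h1 := (h0.inv₀ (by norm_num)).neg
    unfold FSG
    rw [← hs]
    convert h1 using 2
    norm_num
  have htop : Tendsto (FSG β) atTop (nhds 0) := by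
    have he : Tendsto (fun t : ℝ => Real.exp (s * t)) atTop atTop :=
      Real.tendsto_exp_atTop.comp (by simpa using tendsto_id.const_mul_atTop hspos)
    have h1 : Tendsto (fun t : ℝ => 1 + Real.exp (s * t) ^ 2) atTop atTop := by
      apply tendsto_atTop_mono (fun t => ?_) he
      nlinarith [Real.exp_pos (s * t), sq_nonneg (Real.exp (s * t) - 1)]
    have h2 := h1.inv_tendsto_atTop.neg
    unfold FSG
    rw [← hs]
    convert h2 using 1
    norm_num
    rw [neg_zero]
  have hFTC : ∫ t, D0SG β t = 0 - (-1) :=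
    integral_of_hasDerivAt_of_tendsto (hasDerivAt_FSG β) hD0int hbot htop
  rw [hDeq, integral_const_mul, hFTC]
  norm_num

lemma admissible_sg {β : ℝ} (hβ : 0 < β) :
    Admissible β (fun _ => 1) (phiSG β) := by
  have hspos : 0 < Real.sqrt β := Real.sqrt_pos.mpr hβ
  refine ⟨differentiable_const 1, fun t => zero_le_one, ?_, ?_, ?_, ?_, ?_⟩
  · exact fun t => (hasDerivAt_phiSG β t).differentiableAt
  · intro t
    have h1 : 0 < Real.arctan (Real.exp (Real.sqrt β * t)) := by
      rw [← Real.arctan_zero]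
      exact Real.arctan_strictMono (Real.exp_pos _)
    have h2 : Real.arctan (Real.exp (Real.sqrt β * t)) < Real.pi / 2 :=
      Real.arctan_lt_pi_div_two _
    constructor
    · unfold phiSG; linarith
    · unfold phiSG; linarith
  · have he : Tendsto (fun t : ℝ => Real.exp (Real.sqrt β * t)) atBot (nhds 0) :=
      Real.tendsto_exp_atBot.comp (by simpa using tendsto_id.const_mul_atBot hspos)
    have ha : Tendsto (fun t : ℝ => Real.arctan (Real.exp (Real.sqrt β * t)))
        atBot (nhds (Real.arctan 0)) :=
      (Real.continuous_arctan.tendsto 0).comp he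
    have := ha.const_mul 2
    unfold phiSG
    simpa [Real.arctan_zero] using this
  · have he : Tendsto (fun t : ℝ => Real.exp (Real.sqrt β * t)) atTop atTop :=
      Real.tendsto_exp_atTop.comp (by simpa using tendsto_id.const_mul_atTop hspos)
    have ha : Tendsto Real.arctan atTop (nhds (Real.pi / 2)) :=
      Real.tendsto_arctan_atTop.mono_right nhdsWithin_le_nhds
    have h2 := (ha.comp he).const_mul 2
    unfold phiSG
    convert h2 using 2
    · rfl
    · ring
  · rw [gInt_sg hβ]
    exact integrable_DSG hβ

lemma gbeta_sg {β : ℝ} (hβ : 0 < β) :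
    Gbeta β (fun _ => 1) (phiSG β) = Real.sqrt β / 2 := by
  unfold Gbeta
  have : (∫ t : ℝ, gInt β (fun _ => 1) (phiSG β) t) = ∫ t, DSG β t := by
    rw [gInt_sg hβ]
  rw [this, integral_DSG hβ]
  ring

lemma gInt_nonneg {β : ℝ} (hβ : 0 ≤ β) (v φ : ℝ → ℝ) (t : ℝ) :
    0 ≤ gInt β v φ t := by
  unfold gInt
  have h4 : 0 ≤ (β/4) * (v t)^4 * (Real.sin (φ t))^2 := by positivity
  positivity

lemma sigmaBar_le {β : ℝ} (hβ : 0 < β) {v φ : ℝ → ℝ} (h : Admissible β v φ) :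
    sigmaBar β ≤ Gbeta β v φ := by
  apply csInf_le
  · refine ⟨0, fun e he => ?_⟩
    obtain ⟨v', φ', hadm, rfl⟩ := he
    unfold Gbeta
    have : (0:ℝ) ≤ ∫ t : ℝ, gInt β v' φ' t :=
      integral_nonneg (gInt_nonneg hβ.le v' φ')
    linarith
  · exact ⟨v, φ, h, rfl⟩

/-! ### The piecewise-linear test phase -/

lemma phiBeta_measurable (β : ℝ) : Measurable (phiBeta β) := by
  unfold phiBeta
  apply Measurable.ite (measurableSet_Iic (a := -(1/Real.sqrt β))) measurable_const
  apply Measurable.ite (measurableSet_Iic (a := 1/Real.sqrt β)) _ measurable_const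
  exact (measurable_id.add_const _).const_mul _

lemma gbeta_phiBeta_le {β : ℝ} (hβ0 : 0 < β) (hβ1 : β ≤ 1) :
    Gbeta β (fun _ => 1) (phiBeta β) ≤ Real.sqrt β := by
  set s := Real.sqrt β with hs
  have hspos : 0 < s := Real.sqrt_pos.mpr hβ0
  have hs2 : s ^ 2 = β := Real.sq_sqrt hβ0.le
  set a : ℝ := 1 / Real.sqrt β with ha
  have hapos : 0 < a := by rw [ha]; positivity
  set g := gInt β (fun _ => 1) (phiBeta β) with hg
  set h : ℝ → ℝ := (Icc (-a) a).indicator (fun _ => β) with hhdef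
  -- g is nonnegative
  have hg0 : ∀ t, 0 ≤ g t := gInt_nonneg hβ0.le _ _
  -- pointwise bound away from the two corners
  have hptwise : ∀ t, t ≠ -a → t ≠ a → g t ≤ h t := by
    intro t ht1 ht2
    rcases lt_trichotomy t (-a) with hlt | heq | hgt
    · -- t < -a : g t = 0
      have hev : phiBeta β =ᶠ[nhds t] fun _ => (0:ℝ) := by
        filter_upwards [Iio_mem_nhds hlt] with x hx
        rw [mem_Iio] at hx
        unfold phiBeta
        rw [if_pos (by rw [← ha]; linarith)]
      have hd : deriv (phiBeta β) t = 0 := by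
        rw [hev.deriv_eq]; simp
      have hv : phiBeta β t = 0 := by
        unfold phiBeta; rw [if_pos (by rw [← ha]; linarith)]
      have : g t = 0 := by
        rw [hg]; unfold gInt; rw [hd, hv]; simp
      rw [this]
      exact Set.indicator_nonneg (fun _ _ => hβ0.le) t
    · exact absurd heq ht1
    rcases lt_trichotomy t a with hlt' | heq' | hgt'
    · -- -a < t < a : linear part
      have hev : phiBeta β =ᶠ[nhds t]
          fun x => (Real.pi * Real.sqrt β / 2) * (x + 1/Real.sqrt β) := by
        filter_upwards [Ioo_mem_nhds hgt hlt'] with x hx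
        rw [mem_Ioo] at hx
        unfold phiBeta
        rw [if_neg (by push_neg; rw [← ha]; linarith [hx.1]),
          if_pos (by rw [← ha]; linarith [hx.2])]
      have hlin : HasDerivAt
          (fun x : ℝ => (Real.pi * Real.sqrt β / 2) * (x + 1/Real.sqrt β))
          (Real.pi * Real.sqrt β / 2) t := by
        simpa using ((hasDerivAt_id t).add_const (1/Real.sqrt β)).const_mul
          (Real.pi * Real.sqrt β / 2)
      have hd : deriv (phiBeta β) t = Real.pi * s / 2 := by
        rw [hev.deriv_eq, hlin.deriv, ← hs]
      have hht : h t = β := by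
        rw [hhdef, Set.indicator_of_mem (Set.mem_Icc.mpr ⟨hgt.le, hlt'.le⟩)]
      rw [hht, hg]
      unfold gInt
      rw [hd]
      simp only [deriv_const', one_pow]
      have hsin1 : (Real.sin (phiBeta β t)) ^ 2 ≤ 1 := Real.sin_sq_le_one _
      have hsin0 : 0 ≤ (Real.sin (phiBeta β t)) ^ 2 := sq_nonneg _
      have hpi0 : 0 < Real.pi := Real.pi_pos
      have h12 : Real.pi ^ 2 ≤ 12 := by nlinarith [Real.pi_lt_d2, Real.pi_pos]
      nlinarith [hs2, hβ0.le, sq_nonneg s, hsin1, hsin0,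
        mul_le_mul_of_nonneg_right h12 (sq_nonneg s)]
    · exact absurd heq' ht2
    · -- t > a : g t = 0
      have hev : phiBeta β =ᶠ[nhds t] fun _ => Real.pi := by
        filter_upwards [Ioi_mem_nhds hgt'] with x hx
        rw [mem_Ioi] at hx
        unfold phiBeta
        rw [if_neg (by push_neg; rw [← ha]; linarith),
          if_neg (by push_neg; rw [← ha]; linarith)]
      have hd : deriv (phiBeta β) t = 0 := by
        rw [hev.deriv_eq]; simp
      have hv : phiBeta β t = Real.pi := by
        unfold phiBeta
        rw [if_neg (by push_neg; rw [← ha]; linarith),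
          if_neg (by push_neg; rw [← ha]; linarith)]
      have : g t = 0 := by
        rw [hg]; unfold gInt; rw [hd, hv]; simp
      rw [this]
      exact Set.indicator_nonneg (fun _ _ => hβ0.le) t
  -- a.e. bound
  have hae : ∀ᵐ t : ℝ, ‖g t‖ ≤ h t := by
    have hsub : {t : ℝ | ¬ ‖g t‖ ≤ h t} ⊆ ({-a, a} : Set ℝ) := by
      intro t ht
      by_contra hne
      simp only [mem_insert_iff, mem_singleton_iff] at hne
      push_neg at hne
      apply ht
      rw [Real.norm_of_nonneg (hg0 t)]
      exact hptwise t hne.1 hne.2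
    have hnull : volume ({-a, a} : Set ℝ) = 0 :=
      ((Set.finite_singleton a).insert (-a)).measure_zero _
    rw [ae_iff]
    exact measure_mono_null hsub hnull
  -- integrability of the indicator bound
  have hind : Integrable h := by
    rw [hhdef, integrable_indicator_iff measurableSet_Icc]
    exact integrableOn_const measure_Icc_lt_top.ne
  -- measurability of g
  have hgm : AEStronglyMeasurable g volume := by
    have h1 : Measurable (deriv (phiBeta β)) := measurable_deriv _
    have h2 : Measurable (deriv (fun _ : ℝ => (1:ℝ))) := measurable_deriv _
    have h3 : Measurable (phiBeta β) := phiBeta_measurable β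
    apply Measurable.aestronglyMeasurable
    rw [hg]; unfold gInt
    fun_prop
  have hgint : Integrable g := hind.mono' hgm hae
  have hle : (∫ t, g t) ≤ ∫ t, h t := by
    apply integral_mono_ae hgint hind
    filter_upwards [hae] with t ht
    rw [Real.norm_of_nonneg (hg0 t)] at ht
    exact ht
  have hint : (∫ t, h t) = 2 * s := by
    rw [hhdef, integral_indicator_const _ measurableSet_Icc]
    rw [measureReal_def, Real.volume_Icc]
    rw [ENNReal.toReal_ofReal (by linarith)]
    have : a - -a = 2 * a := by ring
    rw [this]
    simp only [smul_eq_mul]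
    rw [ha, ← hs]
    field_simp
    nlinarith [hs2]
  unfold Gbeta
  have : (∫ t : ℝ, gInt β (fun _ => 1) (phiBeta β) t) ≤ 2 * s := by
    rw [← hint]; exact hle
  linarith

theorem sigmaBar_small_beta :
    ∃ C > (0:ℝ), ∀ β ∈ Set.Ioc (0:ℝ) 1,
      sigmaBar β ≤ C * Real.sqrt β ∧
      Gbeta β (fun _ => 1) (phiBeta β) ≤ C * Real.sqrt β := by
  refine ⟨1, one_pos, fun β hβ => ?_⟩
  obtain ⟨hβ0, hβ1⟩ := hβ
  have hsnn : 0 ≤ Real.sqrt β := Real.sqrt_nonneg β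
  constructor
  · have h1 : sigmaBar β ≤ Gbeta β (fun _ => 1) (phiSG β) :=
      sigmaBar_le hβ0 (admissible_sg hβ0)
    rw [gbeta_sg hβ0] at h1
    rw [one_mul]
    linarith
  · rw [one_mul]
    exact gbeta_phiBeta_le hβ0 hβ1
end
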